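/- arXiv:2410.19674 — 4 statements merged into one kernel-verified Lean document; each statement's English description precedes it below -/
import Mathlib

section
/- For positive integers n and m, the join of the friendship graph F_n with the empty graph \overline{K_m} satisfies χ_ld(F_n + \overline{K_m}) = 2n + 2. -/
open Finset

open Classical in
/-- The weight of a vertex: sum of labels of its neighbors. -/
noncomputable def ldWeight {V : Type*} (G : SimpleGraph V) [Fintype V] (f : V → ℕ) (v : V) : ℕ :=
  ∑ x ∈ Finset.univ, if G.Adj v x then f x else 0

/-- `f` is a local distance antimagic labeling of `G`: a bijection onto `{1,…,|V|}`
with adjacent vertices getting distinct weights. -/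
def IsLDAL {V : Type*} (G : SimpleGraph V) [Fintype V] (f : V → ℕ) : Prop :=
  Set.BijOn f Set.univ (Set.Icc 1 (Fintype.card V)) ∧
    ∀ ⦃u v : V⦄, G.Adj u v → ldWeight G f u ≠ ldWeight G f v

/-- The local distance antimagic chromatic number: minimum number of distinct weights. -/
noncomputable def chiLD {V : Type*} (G : SimpleGraph V) [Fintype V] : ℕ :=
  sInf {k | ∃ f : V → ℕ, IsLDAL G f ∧ (Finset.univ.image (ldWeight G f)).card = k}

/-- The join `G + H` of two graphs. -/
def graphJoin {α β : Type*} (G : SimpleGraph α) (H : SimpleGraph β) :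
    SimpleGraph (α ⊕ β) where
  Adj x y :=
    match x, y with
    | Sum.inl a, Sum.inl b => G.Adj a b
    | Sum.inr a, Sum.inr b => H.Adj a b
    | Sum.inl _, Sum.inr _ => True
    | Sum.inr _, Sum.inl _ => True
  symm := by
    constructor
    rintro (a | a) (b | b) h
    exacts [G.adj_symm h, trivial, trivial, H.adj_symm h]
  loopless := by
    constructor
    rintro (a | a) h
    exacts [G.irrefl h, H.irrefl h]

/-- The lexicographic product `G[H]`. -/
def lexProd {α β : Type*} (G : SimpleGraph α) (H : SimpleGraph β) :
    SimpleGraph (α × β) where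
  Adj x y := G.Adj x.1 y.1 ∨ (x.1 = y.1 ∧ H.Adj x.2 y.2)
  symm := by
    constructor
    rintro x y (h | ⟨e, h⟩)
    exacts [Or.inl h.symm, Or.inr ⟨e.symm, h.symm⟩]
  loopless := by
    constructor
    rintro x (h | ⟨e, h⟩)
    exacts [G.irrefl h, H.irrefl h]

/-- The friendship graph `F_n`: `n` triangles sharing the central vertex `none`. -/
def friendship (n : ℕ) : SimpleGraph (Option (Fin n × Fin 2)) where
  Adj x y := x ≠ y ∧ (x = none ∨ y = none ∨ ∃ i a b, x = some (i, a) ∧ y = some (i, b))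
  symm := by
    constructor
    rintro x y ⟨hne, h⟩
    refine ⟨hne.symm, ?_⟩
    rcases h with h | h | ⟨i, a, b, hx, hy⟩
    · exact Or.inr (Or.inl h)
    · exact Or.inl h
    · exact Or.inr (Or.inr ⟨i, b, a, hy, hx⟩)
  loopless := ⟨fun x h => h.1 rfl⟩

/-- The bistar `B_{n,n}`: two adjacent centers, each with `n` leaves. -/
def bistar (n : ℕ) : SimpleGraph (Bool ⊕ Bool × Fin n) where
  Adj x y :=
    match x, y with
    | Sum.inl a, Sum.inl b => a ≠ b
    | Sum.inl a, Sum.inr (c, _) => a = c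
    | Sum.inr (c, _), Sum.inl a => a = c
    | Sum.inr _, Sum.inr _ => False
  symm := by
    constructor
    rintro (a | ⟨c, i⟩) (b | ⟨d, j⟩) h
    exacts [h.symm, h, h, h.elim]
  loopless := by
    constructor
    rintro (a | ⟨c, i⟩) h
    exacts [h rfl, h]


namespace LDAux

abbrev Vt (n m : ℕ) := Option (Fin n × Fin 2) ⊕ Fin m

abbrev Gr (n m : ℕ) : SimpleGraph (Vt n m) :=
  graphJoin (friendship n) (⊥ : SimpleGraph (Fin m))

variable {n m : ℕ}

lemma fr_adj_none_some (p : Fin n × Fin 2) : (friendship n).Adj none (some p) :=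
  ⟨fun h => Option.some_ne_none p h.symm, Or.inl rfl⟩

lemma fr_adj_some_none (p : Fin n × Fin 2) : (friendship n).Adj (some p) none :=
  (friendship n).adj_symm (fr_adj_none_some p)

lemma fr_adj_some_some {i j : Fin n} {k l : Fin 2} :
    (friendship n).Adj (some (i, k)) (some (j, l)) ↔ i = j ∧ k ≠ l := by
  constructor
  · rintro ⟨hne, h⟩
    rcases h with h | h | ⟨i', a, b, hx, hy⟩
    · exact absurd h (by simp)
    · exact absurd h (by simp)
    · simp only [Option.some.injEq, Prod.mk.injEq] at hx hy
      obtain ⟨rfl, rfl⟩ := hx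
      obtain ⟨rfl, rfl⟩ := hy
      exact ⟨rfl, fun h => hne (by rw [h])⟩
  · rintro ⟨rfl, hkl⟩
    exact ⟨by simp [hkl], Or.inr (Or.inr ⟨i, k, l, rfl, rfl⟩)⟩

lemma fin2_succ_ne (k : Fin 2) : k + 1 ≠ k := by revert k; decide

lemma fin2_ne_imp (k l : Fin 2) (h : l ≠ k) : l = k + 1 := by revert k l; decide

lemma w_inr (f : Vt n m → ℕ) (j : Fin m) :
    ldWeight (Gr n m) f (Sum.inr j) = ∑ x : Option (Fin n × Fin 2), f (Sum.inl x) := by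
  classical
  unfold ldWeight
  rw [Fintype.sum_sum_type]
  have h1 : ∀ a : Option (Fin n × Fin 2),
      (if (Gr n m).Adj (Sum.inr j) (Sum.inl a) then f (Sum.inl a) else 0) = f (Sum.inl a) :=
    fun a => if_pos trivial
  have h2 : ∀ b : Fin m,
      (if (Gr n m).Adj (Sum.inr j) (Sum.inr b) then f (Sum.inr b) else 0) = 0 :=
    fun b => if_neg (fun h => h)
  simp only [h1, h2, Finset.sum_const_zero, add_zero]

lemma w_center (f : Vt n m → ℕ) :
    ldWeight (Gr n m) f (Sum.inl none) =
      (∑ p : Fin n × Fin 2, f (Sum.inl (some p))) + ∑ j : Fin m, f (Sum.inr j) := by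
  classical
  unfold ldWeight
  rw [Fintype.sum_sum_type, Fintype.sum_option]
  have h0 : (if (Gr n m).Adj (Sum.inl none) (Sum.inl none) then f (Sum.inl none) else 0) = 0 :=
    if_neg (fun h => (show (friendship n).Adj none none from h).1 rfl)
  have h1 : ∀ p : Fin n × Fin 2,
      (if (Gr n m).Adj (Sum.inl none) (Sum.inl (some p)) then f (Sum.inl (some p)) else 0)
        = f (Sum.inl (some p)) := fun p => if_pos (fr_adj_none_some p)
  have h2 : ∀ b : Fin m,
      (if (Gr n m).Adj (Sum.inl none) (Sum.inr b) then f (Sum.inr b) else 0) = f (Sum.inr b) :=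
    fun b => if_pos trivial
  simp only [h0, h1, h2, zero_add]

lemma w_pair (f : Vt n m → ℕ) (i : Fin n) (k : Fin 2) :
    ldWeight (Gr n m) f (Sum.inl (some (i, k))) =
      f (Sum.inl none) + f (Sum.inl (some (i, k + 1))) + ∑ j : Fin m, f (Sum.inr j) := by
  classical
  unfold ldWeight
  rw [Fintype.sum_sum_type, Fintype.sum_option]
  have h0 : (if (Gr n m).Adj (Sum.inl (some (i, k))) (Sum.inl none)
      then f (Sum.inl none) else 0) = f (Sum.inl none) := if_pos (fr_adj_some_none _)
  have h2 : ∀ b : Fin m,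
      (if (Gr n m).Adj (Sum.inl (some (i, k))) (Sum.inr b) then f (Sum.inr b) else 0)
        = f (Sum.inr b) := fun b => if_pos trivial
  have h1 : (∑ p : Fin n × Fin 2,
      if (Gr n m).Adj (Sum.inl (some (i, k))) (Sum.inl (some p)) then f (Sum.inl (some p)) else 0)
        = f (Sum.inl (some (i, k + 1))) := by
    rw [Finset.sum_eq_single (i, k + 1)]
    · exact if_pos (fr_adj_some_some.mpr ⟨rfl, (fin2_succ_ne k).symm⟩)
    · intro q _ hne
      apply if_neg
      intro hadj
      rcases fr_adj_some_some.mp hadj with ⟨hq1, hq2⟩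
      exact hne (Prod.ext hq1.symm (fin2_ne_imp k q.2 (Ne.symm hq2)))
    · intro h; exact absurd (Finset.mem_univ _) h
  simp only [h0, h1, h2]

lemma cardA (hm : 1 ≤ m) (f : Vt n m → ℕ) (hf : IsLDAL (Gr n m) f) :
    ((Finset.univ : Finset (Vt n m)).image (ldWeight (Gr n m) f)).card = 2 * n + 2 := by
  obtain ⟨hbij, hadj⟩ := hf
  have hinj : Function.Injective f := fun x y h =>
    hbij.injOn (Set.mem_univ x) (Set.mem_univ y) h
  set w := ldWeight (Gr n m) f with hw
  let j0 : Fin m := ⟨0, hm⟩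
  have hwinr : ∀ j : Fin m, w (Sum.inr j) = w (Sum.inr j0) := by
    intro j; rw [hw]; rw [w_inr, w_inr]
  have himg : (Finset.univ : Finset (Vt n m)).image w =
      insert (w (Sum.inl none)) (insert (w (Sum.inr j0))
        ((Finset.univ : Finset (Fin n × Fin 2)).image (fun p => w (Sum.inl (some p))))) := by
    apply Finset.Subset.antisymm
    · intro y hy
      rcases Finset.mem_image.mp hy with ⟨v, _, rfl⟩
      rcases v with (o | j)
      · rcases o with _ | p
        · exact Finset.mem_insert_self _ _
        · exact Finset.mem_insert_of_mem (Finset.mem_insert_of_mem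
            (Finset.mem_image.mpr ⟨p, Finset.mem_univ _, rfl⟩))
      · rw [hwinr j]; exact Finset.mem_insert_of_mem (Finset.mem_insert_self _ _)
    · intro y hy
      rcases Finset.mem_insert.mp hy with rfl | hy
      · exact Finset.mem_image.mpr ⟨_, Finset.mem_univ _, rfl⟩
      rcases Finset.mem_insert.mp hy with rfl | hy
      · exact Finset.mem_image.mpr ⟨_, Finset.mem_univ _, rfl⟩
      rcases Finset.mem_image.mp hy with ⟨p, _, rfl⟩
      exact Finset.mem_image.mpr ⟨_, Finset.mem_univ _, rfl⟩
  have hpinj : Function.Injective (fun p : Fin n × Fin 2 => w (Sum.inl (some p))) := by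
    rintro ⟨p1, p2⟩ ⟨q1, q2⟩ h
    simp only [hw] at h
    rw [w_pair f p1 p2, w_pair f q1 q2] at h
    have h2 : f (Sum.inl (some (p1, p2 + 1))) = f (Sum.inl (some (q1, q2 + 1))) := by omega
    have h3 := hinj h2
    simp only [Sum.inl.injEq, Option.some.injEq, Prod.mk.injEq] at h3
    obtain ⟨h4, h5⟩ := h3
    have h6 : p2 = q2 := add_right_cancel h5
    simp [h4, h6]
  rw [himg]
  rw [Finset.card_insert_of_notMem, Finset.card_insert_of_notMem,
    Finset.card_image_of_injective _ hpinj]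
  · simp only [Finset.card_univ, Fintype.card_prod, Fintype.card_fin]
    omega
  · intro hmem
    rcases Finset.mem_image.mp hmem with ⟨p, _, hp⟩
    exact hadj (show (Gr n m).Adj (Sum.inr j0) (Sum.inl (some p)) from trivial) hp.symm
  · intro hmem
    rcases Finset.mem_insert.mp hmem with h | h
    · exact hadj (show (Gr n m).Adj (Sum.inl none) (Sum.inr j0) from trivial) h
    · rcases Finset.mem_image.mp h with ⟨p, _, hp⟩
      exact hadj (show (Gr n m).Adj (Sum.inl none) (Sum.inl (some p)) from
        fr_adj_none_some p) hp.symm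

/-! ### The explicit labeling -/

def Pv (n : ℕ) : ℕ := (2 * n + 1) * (n + 1)

def Rv (n m : ℕ) : ℕ := ∑ j ∈ Finset.range m, (2 * n + 2 + j)

def av (n m : ℕ) : ℕ :=
  if Pv n = Rv n m + 2 * n + 2 then n + 1
  else if Rv n m + 3 ≤ Pv n ∧ Pv n ≤ Rv n m + 2 * n + 2 then 2 * n + 1
  else 1

def lab (n m : ℕ) : Vt n m → ℕ
  | Sum.inl none => av n m
  | Sum.inl (some (i, k)) =>
      if 2 * (i : ℕ) + (k : ℕ) + 1 < av n m then 2 * (i : ℕ) + (k : ℕ) + 1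
      else 2 * (i : ℕ) + (k : ℕ) + 2
  | Sum.inr j => 2 * n + 2 + (j : ℕ)

lemma av_ge : 1 ≤ av n m := by unfold av; split_ifs <;> omega

lemma av_le : av n m ≤ 2 * n + 1 := by unfold av; split_ifs <;> omega

lemma Rv_ge (hm : 1 ≤ m) : 2 * n + 2 ≤ Rv n m := by
  have := Finset.single_le_sum (f := fun j => 2 * n + 2 + j)
    (fun i _ => Nat.zero_le _) (Finset.mem_range.mpr hm)
  simpa [Rv] using this

lemma lab_pair_eq (i : Fin n) (k : Fin 2) :
    lab n m (Sum.inl (some (i, k))) =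
      if 2 * (i : ℕ) + (k : ℕ) + 1 < av n m then 2 * (i : ℕ) + (k : ℕ) + 1
      else 2 * (i : ℕ) + (k : ℕ) + 2 := rfl

lemma lab_pair_ge (i : Fin n) (k : Fin 2) : 1 ≤ lab n m (Sum.inl (some (i, k))) := by
  rw [lab_pair_eq]; split_ifs <;> omega

lemma lab_pair_le (i : Fin n) (k : Fin 2) : lab n m (Sum.inl (some (i, k))) ≤ 2 * n + 1 := by
  have hi := i.2; have hk := k.2
  rw [lab_pair_eq]; split_ifs <;> omega

lemma lab_pair_ne (i : Fin n) (k : Fin 2) : lab n m (Sum.inl (some (i, k))) ≠ av n m := by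
  rw [lab_pair_eq]; split_ifs with h <;> omega

lemma lab_pair_inj (i j : Fin n) (k l : Fin 2)
    (h : lab n m (Sum.inl (some (i, k))) = lab n m (Sum.inl (some (j, l)))) :
    i = j ∧ k = l := by
  have hk := k.2; have hl := l.2
  rw [lab_pair_eq, lab_pair_eq] at h
  have h2 : 2 * (i : ℕ) + (k : ℕ) = 2 * (j : ℕ) + (l : ℕ) := by
    split_ifs at h <;> omega
  constructor
  · exact Fin.ext (by omega)
  · exact Fin.ext (by omega)

lemma lab_inj : Function.Injective (lab n m) := by
  have ha1 : 1 ≤ av n m := av_ge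
  have ha2 : av n m ≤ 2 * n + 1 := av_le
  rintro (x | x) (y | y) h
  · rcases x with _ | ⟨i, k⟩ <;> rcases y with _ | ⟨j, l⟩
    · rfl
    · exact absurd h.symm (lab_pair_ne j l)
    · exact absurd h (lab_pair_ne i k)
    · obtain ⟨rfl, rfl⟩ := lab_pair_inj i j k l h
      rfl
  · exfalso
    rcases x with _ | ⟨i, k⟩
    · have : lab n m (Sum.inl none) = av n m := rfl
      have h2 : lab n m (Sum.inr y) = 2 * n + 2 + (y : ℕ) := rfl
      omega
    · have h1 := lab_pair_le (m := m) i k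
      have h2 : lab n m (Sum.inr y) = 2 * n + 2 + (y : ℕ) := rfl
      omega
  · exfalso
    rcases y with _ | ⟨i, k⟩
    · have : lab n m (Sum.inl none) = av n m := rfl
      have h2 : lab n m (Sum.inr x) = 2 * n + 2 + (x : ℕ) := rfl
      omega
    · have h1 := lab_pair_le (m := m) i k
      have h2 : lab n m (Sum.inr x) = 2 * n + 2 + (x : ℕ) := rfl
      omega
  · have h2 : (x : ℕ) = (y : ℕ) := by
      have hx : lab n m (Sum.inr x) = 2 * n + 2 + (x : ℕ) := rfl
      have hy : lab n m (Sum.inr y) = 2 * n + 2 + (y : ℕ) := rfl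
      omega
    rw [Sum.inr.injEq]
    exact Fin.ext h2

lemma lab_mem (v : Vt n m) : lab n m v ∈ Set.Icc 1 (2 * n + 1 + m) := by
  have ha1 : 1 ≤ av n m := av_ge
  have ha2 : av n m ≤ 2 * n + 1 := av_le
  rcases v with (o | j)
  · rcases o with _ | ⟨i, k⟩
    · have hc : lab n m (Sum.inl none) = av n m := rfl
      exact ⟨by omega, by omega⟩
    · exact ⟨lab_pair_ge i k, le_trans (lab_pair_le i k) (by omega)⟩
  · have hj := j.2
    have h2 : lab n m (Sum.inr j) = 2 * n + 2 + (j : ℕ) := rfl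
    exact ⟨by omega, by omega⟩

lemma card_Vt : Fintype.card (Vt n m) = 2 * n + 1 + m := by
  simp only [Fintype.card_sum, Fintype.card_option, Fintype.card_prod, Fintype.card_fin]
  omega

lemma lab_bijOn : Set.BijOn (lab n m) Set.univ (Set.Icc 1 (Fintype.card (Vt n m))) := by
  rw [card_Vt]
  refine ⟨fun v _ => lab_mem v, fun x _ y _ h => lab_inj h, ?_⟩
  have himg : lab n m '' Set.univ = Set.Icc 1 (2 * n + 1 + m) := by
    apply Set.eq_of_subset_of_ncard_le
    · rintro y ⟨v, _, rfl⟩; exact lab_mem v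
    · rw [Set.ncard_image_of_injective _ lab_inj, Set.ncard_univ,
        Nat.card_eq_fintype_card, card_Vt]
      have : Set.Icc 1 (2 * n + 1 + m) = ((Finset.Icc 1 (2 * n + 1 + m) : Finset ℕ) : Set ℕ) := by
        simp
      rw [this, Set.ncard_coe_finset, Nat.card_Icc]
      omega
    · exact Set.finite_Icc _ _
  rw [← himg]
  exact Set.Subset.rfl

lemma lab_image :
    ((Finset.univ : Finset (Fin n × Fin 2)).image fun p => lab n m (Sum.inl (some p)))
      = (Finset.Icc 1 (2 * n + 1)).erase (av n m) := by
  apply Finset.eq_of_subset_of_card_le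
  · intro y hy
    rcases Finset.mem_image.mp hy with ⟨⟨i, k⟩, _, rfl⟩
    exact Finset.mem_erase.mpr ⟨lab_pair_ne i k,
      Finset.mem_Icc.mpr ⟨lab_pair_ge i k, lab_pair_le i k⟩⟩
  · have h1 : ((Finset.Icc 1 (2 * n + 1)).erase (av n m)).card = 2 * n := by
      rw [Finset.card_erase_of_mem (Finset.mem_Icc.mpr ⟨av_ge, av_le⟩), Nat.card_Icc]
      omega
    have h2 : ((Finset.univ : Finset (Fin n × Fin 2)).image
        fun p => lab n m (Sum.inl (some p))).card = 2 * n := by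
      rw [Finset.card_image_of_injective _
        (fun p q h => by
          obtain ⟨h1', h2'⟩ := lab_pair_inj p.1 q.1 p.2 q.2 h
          exact Prod.ext h1' h2')]
      simp only [Finset.card_univ, Fintype.card_prod, Fintype.card_fin]
      omega
    omega

lemma sum_Icc_eq : (∑ x ∈ Finset.Icc 1 (2 * n + 1), x) = Pv n := by
  have h1 : Finset.Icc 1 (2 * n + 1) = Finset.Ico 1 (2 * n + 2) := by
    rw [← Finset.Ico_add_one_right_eq_Icc]; rfl
  rw [h1, Finset.sum_Ico_eq_sum_range]
  have h2 : 2 * n + 2 - 1 = 2 * n + 1 := by omega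
  rw [h2]
  apply Nat.eq_of_mul_eq_mul_right (show 0 < 2 by norm_num)
  rw [Finset.sum_add_distrib, Finset.sum_const, Finset.card_range, smul_eq_mul, mul_one,
    add_mul, Finset.sum_range_id_mul_two]
  have h3 : 2 * n + 1 - 1 = 2 * n := by omega
  rw [h3]
  unfold Pv
  ring

lemma lab_pair_sum :
    (∑ p : Fin n × Fin 2, lab n m (Sum.inl (some p))) + av n m = Pv n := by
  have h1 : (∑ p : Fin n × Fin 2, lab n m (Sum.inl (some p)))
      = ∑ y ∈ (Finset.Icc 1 (2 * n + 1)).erase (av n m), y := by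
    rw [← lab_image, Finset.sum_image]
    intro p _ q _ h
    obtain ⟨h1', h2'⟩ := lab_pair_inj p.1 q.1 p.2 q.2 h
    exact Prod.ext h1' h2'
  rw [h1]
  have ha : av n m ∈ Finset.Icc 1 (2 * n + 1) := Finset.mem_Icc.mpr ⟨av_ge, av_le⟩
  rw [Finset.sum_erase_add _ _ ha]
  exact sum_Icc_eq

lemma lab_inr_sum : (∑ j : Fin m, lab n m (Sum.inr j)) = Rv n m := by
  unfold Rv
  rw [← Fin.sum_univ_eq_sum_range]
  rfl

lemma lab_inl_sum :
    (∑ x : Option (Fin n × Fin 2), lab n m (Sum.inl x))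
      = av n m + ∑ p : Fin n × Fin 2, lab n m (Sum.inl (some p)) := by
  rw [Fintype.sum_option]
  rfl

lemma arith2 (hn : 1 ≤ n) (a x : ℕ) (ha1 : 1 ≤ a) (ha2 : a ≤ 2 * n + 1)
    (hx1 : 1 ≤ x) (hx2 : x ≤ 2 * n + 1) (hxa : x ≠ a) : a + a + x ≠ Pv n := by
  unfold Pv
  rcases Nat.lt_or_ge n 2 with h | h
  · have hn1 : n = 1 := by omega
    subst hn1
    norm_num
    omega
  · have h1 : a + a + x ≤ 6 * n + 2 := by omega
    have h2 : 6 * n + 2 < (2 * n + 1) * (n + 1) := by nlinarith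
    omega

lemma arith3 (x : ℕ) (hx1 : 1 ≤ x) (hx2 : x ≤ 2 * n + 1) (hxa : x ≠ av n m) :
    av n m + x + Rv n m ≠ Pv n := by
  unfold av at hxa ⊢
  split_ifs at hxa ⊢ with h1 h2 <;> omega

lemma lab_weights (hn : 1 ≤ n) (hm : 1 ≤ m) :
    ∀ ⦃u v : Vt n m⦄, (Gr n m).Adj u v →
      ldWeight (Gr n m) (lab n m) u ≠ ldWeight (Gr n m) (lab n m) v := by
  have hSA := lab_pair_sum (n := n) (m := m)
  have hRR := lab_inr_sum (n := n) (m := m)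
  have hR2 := Rv_ge (n := n) hm
  have ha1 : 1 ≤ av n m := av_ge
  have ha2 : av n m ≤ 2 * n + 1 := av_le
  -- helper: center weight vs pair weight
  have hcp : ∀ (i : Fin n) (k : Fin 2),
      ldWeight (Gr n m) (lab n m) (Sum.inl none) ≠
        ldWeight (Gr n m) (lab n m) (Sum.inl (some (i, k))) := by
    intro i k
    rw [w_center, w_pair]
    have hx1 := lab_pair_ge (m := m) i (k + 1)
    have hx2 := lab_pair_le (m := m) i (k + 1)
    have hxa := lab_pair_ne (m := m) i (k + 1)
    have harith := arith2 hn (av n m) (lab n m (Sum.inl (some (i, k + 1))))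
      ha1 ha2 hx1 hx2 hxa
    have hc : lab n m (Sum.inl none) = av n m := rfl
    rw [hc, hRR]
    omega
  have hci : ∀ (j : Fin m),
      ldWeight (Gr n m) (lab n m) (Sum.inl none) ≠
        ldWeight (Gr n m) (lab n m) (Sum.inr j) := by
    intro j
    rw [w_center, w_inr, lab_inl_sum, hRR]
    omega
  have hpi : ∀ (i : Fin n) (k : Fin 2) (j : Fin m),
      ldWeight (Gr n m) (lab n m) (Sum.inl (some (i, k))) ≠
        ldWeight (Gr n m) (lab n m) (Sum.inr j) := by
    intro i k j
    rw [w_pair, w_inr, lab_inl_sum, hRR]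
    have hx1 := lab_pair_ge (m := m) i (k + 1)
    have hx2 := lab_pair_le (m := m) i (k + 1)
    have hxa := lab_pair_ne (m := m) i (k + 1)
    have harith := arith3 (lab n m (Sum.inl (some (i, k + 1)))) hx1 hx2 hxa
    have hc : lab n m (Sum.inl none) = av n m := rfl
    rw [hc]
    omega
  rintro (o | j) (o' | j') hadj
  · rcases o with _ | ⟨i, k⟩ <;> rcases o' with _ | ⟨i', k'⟩
    · exact ((Gr n m).irrefl hadj).elim
    · exact hcp i' k'
    · exact (hcp i k).symm
    · -- two pair vertices, same triangle
      rcases fr_adj_some_some.mp hadj with ⟨rfl, hkk⟩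
      rw [w_pair, w_pair]
      have hne : lab n m (Sum.inl (some (i, k + 1))) ≠ lab n m (Sum.inl (some (i, k' + 1))) := by
        intro h
        obtain ⟨_, h2⟩ := lab_pair_inj i i (k + 1) (k' + 1) h
        exact hkk (add_right_cancel h2)
      omega
  · rcases o with _ | ⟨i, k⟩
    · exact hci j'
    · exact hpi i k j'
  · rcases o' with _ | ⟨i, k⟩
    · exact (hci j).symm
    · exact (hpi i k j).symm
  · exact (hadj : False).elim

lemma lab_isLDAL (hn : 1 ≤ n) (hm : 1 ≤ m) : IsLDAL (Gr n m) (lab n m) :=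
  ⟨lab_bijOn, lab_weights hn hm⟩

end LDAux

theorem stmt_7 (n m : ℕ) (hn : 1 ≤ n) (hm : 1 ≤ m) :
    chiLD (graphJoin (friendship n) (⊥ : SimpleGraph (Fin m))) = 2 * n + 2 := by
  have hset : {k | ∃ f : LDAux.Vt n m → ℕ, IsLDAL (LDAux.Gr n m) f ∧
      (Finset.univ.image (ldWeight (LDAux.Gr n m) f)).card = k} = {2 * n + 2} := by
    ext k
    simp only [Set.mem_setOf_eq, Set.mem_singleton_iff]
    constructor
    · rintro ⟨f, hf, rfl⟩
      exact LDAux.cardA hm f hf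
    · rintro rfl
      exact ⟨LDAux.lab n m, LDAux.lab_isLDAL hn hm,
        LDAux.cardA hm _ (LDAux.lab_isLDAL hn hm)⟩
  show chiLD (LDAux.Gr n m) = 2 * n + 2
  unfold chiLD
  rw [hset]
  exact csInf_singleton _
end

section
/- For any positive integer n, χ_ld(F_n + B_{n,n}) = 2n + 5, where F_n is the friendship graph and B_{n,n} is the bistar. -/
open Finset

section Helpers

variable {n : ℕ}

abbrev Vty (n : ℕ) := Option (Fin n × Fin 2) ⊕ (Bool ⊕ Bool × Fin n)

abbrev Gr (n : ℕ) : SimpleGraph (Vty n) := graphJoin (friendship n) (bistar n)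

lemma join_adj_ll {α β : Type*} (G : SimpleGraph α) (H : SimpleGraph β) (a b : α) :
    (graphJoin G H).Adj (Sum.inl a) (Sum.inl b) ↔ G.Adj a b := Iff.rfl

lemma join_adj_lr {α β : Type*} (G : SimpleGraph α) (H : SimpleGraph β) (a : α) (b : β) :
    (graphJoin G H).Adj (Sum.inl a) (Sum.inr b) := trivial

lemma join_adj_rl {α β : Type*} (G : SimpleGraph α) (H : SimpleGraph β) (a : α) (b : β) :
    (graphJoin G H).Adj (Sum.inr b) (Sum.inl a) := trivial

lemma join_adj_rr {α β : Type*} (G : SimpleGraph α) (H : SimpleGraph β) (a b : β) :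
    (graphJoin G H).Adj (Sum.inr a) (Sum.inr b) ↔ H.Adj a b := Iff.rfl

lemma bs_adj_cc (c d : Bool) : (bistar n).Adj (Sum.inl c) (Sum.inl d) ↔ c ≠ d := Iff.rfl

lemma bs_adj_cl (c d : Bool) (i : Fin n) :
    (bistar n).Adj (Sum.inl c) (Sum.inr (d, i)) ↔ c = d := Iff.rfl

lemma bs_adj_lc (c d : Bool) (i : Fin n) :
    (bistar n).Adj (Sum.inr (d, i)) (Sum.inl c) ↔ c = d := Iff.rfl

lemma bs_adj_ll (p q : Bool × Fin n) :
    ¬ (bistar n).Adj (Sum.inr p) (Sum.inr q) := by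
  obtain ⟨c, i⟩ := p; obtain ⟨d, j⟩ := q; exact fun h => h

/-- the partner of `j` in `Fin 2` -/
def pt (j : Fin 2) : Fin 2 := ⟨1 - j.val, by omega⟩

lemma fr_adj_none_some (p : Fin n × Fin 2) : (friendship n).Adj none (some p) :=
  And.intro (by simp) (Or.inl rfl)

lemma fr_adj_none_none : ¬ (friendship n).Adj none none := fun h => (And.left h) rfl

lemma fr_adj_some_none (p : Fin n × Fin 2) : (friendship n).Adj (some p) none :=
  And.intro (by simp) (Or.inr (Or.inl rfl))

lemma fr_adj_some_some (i k : Fin n) (j l : Fin 2) :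
    (friendship n).Adj (some (i,j)) (some (k,l)) ↔ (k = i ∧ l ≠ j) := by
  constructor
  · intro h0
    obtain ⟨hne, h | h | ⟨i', a, b, h1, h2⟩⟩ := (h0 : _ ∧ _)
    · exact absurd h (by simp)
    · exact absurd h (by simp)
    · simp only [Option.some_inj, Prod.mk.injEq] at h1 h2
      obtain ⟨rfl, rfl⟩ := h1
      obtain ⟨rfl, rfl⟩ := h2
      exact ⟨rfl, fun hl => hne (by rw [hl])⟩
  · rintro ⟨hk, hl⟩
    refine And.intro ?_ (Or.inr (Or.inr ⟨i, j, l, rfl, by rw [hk]⟩))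
    intro h
    simp only [Option.some_inj, Prod.mk.injEq] at h
    exact hl h.2.symm

lemma pair_eq_iff (i k : Fin n) (j l : Fin 2) : (k = i ∧ l ≠ j) ↔ (k, l) = (i, pt j) := by
  have hjlt := j.isLt; have hllt := l.isLt
  rw [Prod.ext_iff]
  constructor
  · rintro ⟨h1, h2⟩
    refine ⟨h1, ?_⟩
    have h2v : l.val ≠ j.val := fun hh => h2 (Fin.ext hh)
    exact Fin.ext (by show l.val = 1 - j.val; omega)
  · rintro ⟨h1, h2⟩
    refine ⟨h1, fun hh => ?_⟩
    have hv := congrArg Fin.val h2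
    have hv2 := congrArg Fin.val hh
    simp only [pt] at hv
    omega

section Weights

variable (f : Vty n → ℕ)

/-- sum of labels on the B-side -/
def sB (f : Vty n → ℕ) : ℕ := ∑ b : Bool ⊕ Bool × Fin n, f (Sum.inr b)

/-- sum of labels on the F-side -/
def sF (f : Vty n → ℕ) : ℕ := ∑ a : Option (Fin n × Fin 2), f (Sum.inl a)

lemma weight_center :
    ldWeight (Gr n) f (Sum.inl none) = sB f + ∑ p : Fin n × Fin 2, f (Sum.inl (some p)) := by
  classical
  rw [ldWeight, Fintype.sum_sum_type]
  have hB : (∑ b : Bool ⊕ Bool × Fin n,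
      if (Gr n).Adj (Sum.inl none) (Sum.inr b) then f (Sum.inr b) else 0) = sB f := by
    simp [sB, join_adj_lr]
  have hF : (∑ a : Option (Fin n × Fin 2),
      if (Gr n).Adj (Sum.inl none) (Sum.inl a) then f (Sum.inl a) else 0)
      = ∑ p : Fin n × Fin 2, f (Sum.inl (some p)) := by
    rw [Fintype.sum_option]
    simp only [join_adj_ll]
    simp [fr_adj_none_none, fr_adj_none_some]
  rw [hB, hF, Nat.add_comm]

lemma weight_leaf (i : Fin n) (j : Fin 2) :
    ldWeight (Gr n) f (Sum.inl (some (i,j))) =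
      sB f + f (Sum.inl none) + f (Sum.inl (some (i, pt j))) := by
  classical
  rw [ldWeight, Fintype.sum_sum_type]
  have hB : (∑ b : Bool ⊕ Bool × Fin n,
      if (Gr n).Adj (Sum.inl (some (i,j))) (Sum.inr b) then f (Sum.inr b) else 0) = sB f := by
    simp [sB, join_adj_lr]
  have hF : (∑ a : Option (Fin n × Fin 2),
      if (Gr n).Adj (Sum.inl (some (i,j))) (Sum.inl a) then f (Sum.inl a) else 0)
      = f (Sum.inl none) + f (Sum.inl (some (i, pt j))) := by
    rw [Fintype.sum_option]
    congr 1
    · simp [join_adj_ll, fr_adj_some_none]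
    · have h2 : ∀ p : Fin n × Fin 2,
          (if (Gr n).Adj (Sum.inl (some (i,j))) (Sum.inl (some p)) then f (Sum.inl (some p)) else 0)
          = (if p = (i, pt j) then f (Sum.inl (some p)) else 0) := by
        rintro ⟨k, l⟩
        simp only [join_adj_ll, fr_adj_some_some, pair_eq_iff]
      rw [Finset.sum_congr rfl (fun p _ => h2 p), Finset.sum_ite_eq' Finset.univ]
      simp
  rw [hB, hF]; ring

lemma weight_bcenter (c : Bool) :
    ldWeight (Gr n) f (Sum.inr (Sum.inl c)) =
      sF f + f (Sum.inr (Sum.inl (!c))) + ∑ i : Fin n, f (Sum.inr (Sum.inr (c, i))) := by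
  classical
  rw [ldWeight, Fintype.sum_sum_type]
  have hF : (∑ a : Option (Fin n × Fin 2),
      if (Gr n).Adj (Sum.inr (Sum.inl c)) (Sum.inl a) then f (Sum.inl a) else 0) = sF f := by
    simp [sF, join_adj_rl]
  have hB : (∑ b : Bool ⊕ Bool × Fin n,
      if (Gr n).Adj (Sum.inr (Sum.inl c)) (Sum.inr b) then f (Sum.inr b) else 0)
      = f (Sum.inr (Sum.inl (!c))) + ∑ i : Fin n, f (Sum.inr (Sum.inr (c, i))) := by
    rw [Fintype.sum_sum_type]
    congr 1
    · rw [Fintype.sum_bool]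
      cases c <;> simp [join_adj_rr, bs_adj_cc]
    · rw [Fintype.sum_prod_type, Fintype.sum_bool]
      have hcond : ∀ (d : Bool) (i : Fin n),
          (if (Gr n).Adj (Sum.inr (Sum.inl c)) (Sum.inr (Sum.inr (d, i)))
            then f (Sum.inr (Sum.inr (d, i))) else 0)
          = (if c = d then f (Sum.inr (Sum.inr (d, i))) else 0) := by
        intro d i
        simp only [join_adj_rr, bs_adj_cl]
      cases c <;> simp [hcond]
  rw [hF, hB]; ring

lemma weight_bleaf (c : Bool) (i : Fin n) :
    ldWeight (Gr n) f (Sum.inr (Sum.inr (c, i))) = sF f + f (Sum.inr (Sum.inl c)) := by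
  classical
  rw [ldWeight, Fintype.sum_sum_type]
  have hF : (∑ a : Option (Fin n × Fin 2),
      if (Gr n).Adj (Sum.inr (Sum.inr (c, i))) (Sum.inl a) then f (Sum.inl a) else 0) = sF f := by
    simp [sF, join_adj_rl]
  have hB : (∑ b : Bool ⊕ Bool × Fin n,
      if (Gr n).Adj (Sum.inr (Sum.inr (c, i))) (Sum.inr b) then f (Sum.inr b) else 0)
      = f (Sum.inr (Sum.inl c)) := by
    rw [Fintype.sum_sum_type]
    have h1 : (∑ d : Bool,
        if (Gr n).Adj (Sum.inr (Sum.inr (c, i))) (Sum.inr (Sum.inl d)) then f (Sum.inr (Sum.inl d)) else 0)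
        = f (Sum.inr (Sum.inl c)) := by
      rw [Fintype.sum_bool]
      have hc : ∀ d : Bool, (Gr n).Adj (Sum.inr (Sum.inr (c, i))) (Sum.inr (Sum.inl d)) ↔ d = c := by
        intro d; rw [join_adj_rr, bs_adj_lc]
      cases c <;> simp [hc]
    have h2 : (∑ p : Bool × Fin n,
        if (Gr n).Adj (Sum.inr (Sum.inr (c, i))) (Sum.inr (Sum.inr p)) then f (Sum.inr (Sum.inr p)) else 0)
        = 0 := by
      refine Finset.sum_eq_zero fun p _ => ?_
      rw [if_neg]
      rw [join_adj_rr]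
      exact bs_adj_ll _ _
    rw [h1, h2]
    omega
  rw [hF, hB]

end Weights
end Helpers
section Explicit

variable {n : ℕ}

/-- Gauss sum -/
def kk (n : ℕ) : ℕ := ∑ i : Fin n, (i : ℕ)

lemma kk_eq (n : ℕ) : 2 * kk n + n = n * n := by
  have h := Finset.sum_range_id_mul_two n
  have h2 : kk n = ∑ i ∈ Finset.range n, i :=
    Fin.sum_univ_eq_sum_range (fun i => i) n
  rw [h2]
  cases n with
  | zero => simp
  | succ m =>
    have : (∑ i ∈ Finset.range (m+1), i) * 2 = (m+1) * m := by
      rw [h]; simp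
    calc 2 * (∑ i ∈ Finset.range (m+1), i) + (m+1)
        = (∑ i ∈ Finset.range (m+1), i) * 2 + (m+1) := by ring
      _ = (m+1) * m + (m+1) := by rw [this]
      _ = (m+1) * (m+1) := by ring

/-- The explicit labeling -/
def fLab (n : ℕ) : Vty n → ℕ
  | Sum.inl none => 2*n+1
  | Sum.inl (some (i,j)) => 2*i.val + j.val + 1
  | Sum.inr (Sum.inl false) => 2*n+2
  | Sum.inr (Sum.inl true) => 2*n+3
  | Sum.inr (Sum.inr (false, i)) => 3*n+4+i.val
  | Sum.inr (Sum.inr (true, i)) => 2*n+4+i.val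

lemma fLab_injective : Function.Injective (fLab n) := by
  rintro ((_|⟨i,j⟩) | (b | ⟨b,i⟩)) ((_|⟨k,l⟩) | (d | ⟨d,m⟩)) h <;>
  · try cases b
    all_goals try cases d
    all_goals (
      simp only [fLab] at h
      try have hi := i.isLt
      try have hj := j.isLt
      try have hk := k.isLt
      try have hl := l.isLt
      try have hm := m.isLt
      first
        | rfl
        | (exfalso; omega)
        | (simp only [Sum.inl.injEq, Sum.inr.injEq, Option.some.injEq, Prod.mk.injEq,
            Fin.ext_iff, eq_self_iff_true, true_and, and_true]
           omega))

lemma fLab_bounds (v : Vty n) : 1 ≤ fLab n v ∧ fLab n v ≤ 4*n+3 := by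
  rcases v with (_|⟨i,j⟩) | (b | ⟨b,i⟩)
  · simp [fLab]; omega
  · have hi := i.isLt; have hj := j.isLt
    simp only [fLab]; omega
  · cases b <;> (simp only [fLab]; omega)
  · have hi := i.isLt
    cases b <;> (simp only [fLab]; omega)

lemma card_Vty : Fintype.card (Vty n) = 4*n+3 := by
  simp [Fintype.card_sum, Fintype.card_option, Fintype.card_prod]
  omega

lemma fLab_image : Finset.univ.image (fLab n) = Finset.Icc 1 (4*n+3) := by
  apply Finset.eq_of_subset_of_card_le
  · intro y hy
    simp only [Finset.mem_image] at hy
    obtain ⟨v, _, rfl⟩ := hy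
    have := fLab_bounds v
    simp only [Finset.mem_Icc]
    omega
  · rw [Nat.card_Icc, Finset.card_image_of_injective _ fLab_injective,
      Finset.card_univ, card_Vty]
    omega

lemma fLab_bijOn :
    Set.BijOn (fLab n) Set.univ (Set.Icc 1 (Fintype.card (Vty n))) := by
  rw [card_Vty]
  refine ⟨fun v _ => ?_, fun u _ v _ h => fLab_injective h, fun y hy => ?_⟩
  · have := fLab_bounds v
    simp only [Set.mem_Icc]
    omega
  · have hy' : y ∈ Finset.Icc 1 (4*n+3) := by
      simp only [Finset.mem_Icc]
      exact ⟨hy.1, hy.2⟩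
    rw [← fLab_image] at hy'
    simp only [Finset.mem_image] at hy'
    obtain ⟨v, _, rfl⟩ := hy'
    exact ⟨v, Set.mem_univ v, rfl⟩

lemma sF_fLab : sF (fLab n) = 5*n + 1 + 4 * kk n := by
  rw [sF, Fintype.sum_option]
  have h1 : (∑ p : Fin n × Fin 2, fLab n (Sum.inl (some p))) = 3*n + 4 * kk n := by
    rw [Fintype.sum_prod_type]
    have h2 : ∀ i : Fin n, (∑ j : Fin 2, fLab n (Sum.inl (some (i, j)))) = 4*i.val + 3 := by
      intro i
      rw [Fin.sum_univ_two]
      simp [fLab]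
      omega
    rw [Finset.sum_congr rfl (fun i _ => h2 i), Finset.sum_add_distrib,
      ← Finset.mul_sum, Finset.sum_const, Finset.card_univ, Fintype.card_fin, smul_eq_mul]
    rw [kk]; ring
  rw [h1]
  simp only [fLab]
  ring

lemma sB_fLab : sB (fLab n) = 5*n*n + 12*n + 5 + 2 * kk n := by
  rw [sB, Fintype.sum_sum_type, Fintype.sum_bool, Fintype.sum_prod_type, Fintype.sum_bool]
  have hf : (∑ i : Fin n, fLab n (Sum.inr (Sum.inr (false, i)))) = n*(3*n+4) + kk n := by
    simp only [fLab]
    rw [Finset.sum_add_distrib, Finset.sum_const, Finset.card_univ, Fintype.card_fin,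
      smul_eq_mul, kk]
  have ht : (∑ i : Fin n, fLab n (Sum.inr (Sum.inr (true, i)))) = n*(2*n+4) + kk n := by
    simp only [fLab]
    rw [Finset.sum_add_distrib, Finset.sum_const, Finset.card_univ, Fintype.card_fin,
      smul_eq_mul, kk]
  rw [ht, hf]
  simp only [fLab]
  ring

lemma wv_leaf (i : Fin n) (j : Fin 2) :
    ldWeight (Gr n) (fLab n) (Sum.inl (some (i,j))) =
      5*n*n + 12*n + 5 + 2 * kk n + (2*n+2) + (2*i.val + (1 - j.val)) := by
  rw [weight_leaf, sB_fLab]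
  simp only [fLab, pt]
  omega

lemma wv_center :
    ldWeight (Gr n) (fLab n) (Sum.inl none) =
      5*n*n + 12*n + 5 + 2 * kk n + (3*n + 4 * kk n) := by
  rw [weight_center, sB_fLab]
  congr 1
  rw [Fintype.sum_prod_type]
  have h2 : ∀ i : Fin n, (∑ j : Fin 2, fLab n (Sum.inl (some (i, j)))) = 4*i.val + 3 := by
    intro i
    rw [Fin.sum_univ_two]
    simp [fLab]
    omega
  rw [Finset.sum_congr rfl (fun i _ => h2 i), Finset.sum_add_distrib,
    ← Finset.mul_sum, Finset.sum_const, Finset.card_univ, Fintype.card_fin, smul_eq_mul]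
  rw [kk]; ring

lemma wv_a :
    ldWeight (Gr n) (fLab n) (Sum.inr (Sum.inl false)) =
      (5*n + 1 + 4 * kk n) + (2*n+3) + (n*(3*n+4) + kk n) := by
  rw [weight_bcenter, sF_fLab]
  have hf : (∑ i : Fin n, fLab n (Sum.inr (Sum.inr (false, i)))) = n*(3*n+4) + kk n := by
    simp only [fLab]
    rw [Finset.sum_add_distrib, Finset.sum_const, Finset.card_univ, Fintype.card_fin,
      smul_eq_mul, kk]
  rw [hf]
  simp only [Bool.not_false, fLab]

lemma wv_b :
    ldWeight (Gr n) (fLab n) (Sum.inr (Sum.inl true)) =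
      (5*n + 1 + 4 * kk n) + (2*n+2) + (n*(2*n+4) + kk n) := by
  rw [weight_bcenter, sF_fLab]
  have ht : (∑ i : Fin n, fLab n (Sum.inr (Sum.inr (true, i)))) = n*(2*n+4) + kk n := by
    simp only [fLab]
    rw [Finset.sum_add_distrib, Finset.sum_const, Finset.card_univ, Fintype.card_fin,
      smul_eq_mul, kk]
  rw [ht]
  simp only [Bool.not_true, fLab]

lemma wv_bleaf (b : Bool) (i : Fin n) :
    ldWeight (Gr n) (fLab n) (Sum.inr (Sum.inr (b, i))) =
      (5*n + 1 + 4 * kk n) + (if b then 2*n+3 else 2*n+2) := by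
  rw [weight_bleaf, sF_fLab]
  cases b <;> simp [fLab]

end Explicit
section Bounds

variable {n : ℕ}

lemma pt_inj {j l : Fin 2} (h : pt j = pt l) : j = l := by
  have h1 := congrArg Fin.val h
  simp only [pt] at h1
  have hj := j.isLt; have hl := l.isLt
  exact Fin.ext (by omega)

lemma cross_lt (hn : 1 ≤ n) (x : Option (Fin n × Fin 2)) (y : Bool ⊕ Bool × Fin n) :
    ldWeight (Gr n) (fLab n) (Sum.inr y) < ldWeight (Gr n) (fLab n) (Sum.inl x) := by
  have hK := kk_eq n
  rcases x with _ | ⟨i, j⟩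
  · rw [wv_center]
    rcases y with b | ⟨b, m⟩
    · cases b
      · rw [wv_a]; nlinarith [hK]
      · rw [wv_b]; nlinarith [hK]
    · rw [wv_bleaf]; cases b <;> simp only [if_true, if_false, Bool.false_eq_true] <;> nlinarith [hK]
  · have hi := i.isLt
    have hj : 1 - j.val ≤ 1 := by omega
    rw [wv_leaf]
    rcases y with b | ⟨b, m⟩
    · cases b
      · rw [wv_a]; nlinarith [hK]
      · rw [wv_b]; nlinarith [hK]
    · rw [wv_bleaf]; cases b <;> simp only [if_true, if_false, Bool.false_eq_true] <;> nlinarith [hK]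

lemma center_ne_leaf (hn : 1 ≤ n) (k : Fin n) (l : Fin 2) :
    ldWeight (Gr n) (fLab n) (Sum.inl none) ≠
      ldWeight (Gr n) (fLab n) (Sum.inl (some (k,l))) := by
  have hK := kk_eq n
  have hk := k.isLt
  have hl := l.isLt
  rw [wv_center, wv_leaf]
  intro heq
  have hcase : n = 1 ∨ n = 2 ∨ 3 ≤ n := by omega
  rcases hcase with rfl | rfl | h3
  · have h1 : kk 1 = 0 := by decide
    rw [h1] at heq; omega
  · have h1 : kk 2 = 1 := by decide
    rw [h1] at heq; omega
  · have h3n : 3*n ≤ n*n := Nat.mul_le_mul_right n h3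
    have he : 1 - l.val ≤ 1 := by omega
    nlinarith [heq]

lemma fLab_ldal (hn : 1 ≤ n) : IsLDAL (Gr n) (fLab n) := by
  refine ⟨fLab_bijOn, ?_⟩
  have hK := kk_eq n
  rintro ((_|⟨i,j⟩) | (b | ⟨b,i⟩)) ((_|⟨k,l⟩) | (d | ⟨d,m⟩)) h
  -- u = inl none
  · exact absurd ((join_adj_ll _ _ _ _).1 h) fr_adj_none_none
  · exact center_ne_leaf hn k l
  · exact (cross_lt hn none _).ne'
  · exact (cross_lt hn none _).ne'
  -- u = inl (some (i,j))
  · exact (center_ne_leaf hn i j).symm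
  · rw [join_adj_ll, fr_adj_some_some] at h
    obtain ⟨rfl, hlj⟩ := h
    rw [wv_leaf, wv_leaf]
    intro heq
    have h2 := Nat.add_left_cancel heq
    have h3 : l.val ≠ j.val := fun hh => hlj (Fin.ext hh)
    have hj := j.isLt; have hl := l.isLt
    omega
  · exact (cross_lt hn (some (i,j)) _).ne'
  · exact (cross_lt hn (some (i,j)) _).ne'
  -- u = inr (inl b)
  · exact (cross_lt hn none _).ne
  · exact (cross_lt hn (some (k,l)) _).ne
  · rw [join_adj_rr, bs_adj_cc] at h
    cases b <;> cases d
    · exact absurd rfl h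
    · rw [wv_a, wv_b]; intro heq; nlinarith [heq, hK]
    · rw [wv_b, wv_a]; intro heq; nlinarith [heq, hK]
    · exact absurd rfl h
  · rw [join_adj_rr, bs_adj_cl] at h
    cases b <;> cases d <;> simp only [Bool.false_eq_true, Bool.true_eq_false] at h
    · rw [wv_a, wv_bleaf]
      simp only [if_true, if_false, Bool.false_eq_true]
      intro heq; nlinarith [heq, hK]
    · rw [wv_b, wv_bleaf]
      simp only [if_true, if_false]
      intro heq; nlinarith [heq, hK]
  -- u = inr (inr (b,i))
  · exact (cross_lt hn none _).ne
  · exact (cross_lt hn (some (k,l)) _).ne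
  · rw [join_adj_rr, bs_adj_lc] at h
    cases b <;> cases d <;> simp only [Bool.false_eq_true, Bool.true_eq_false] at h
    · rw [wv_bleaf, wv_a]
      simp only [if_true, if_false, Bool.false_eq_true]
      intro heq; nlinarith [heq, hK]
    · rw [wv_bleaf, wv_b]
      simp only [if_true, if_false]
      intro heq; nlinarith [heq, hK]
  · exact absurd ((join_adj_rr _ _ _ _).1 h) (bs_adj_ll _ _)

lemma upper_bound (hn : 1 ≤ n) :
    (Finset.univ.image (ldWeight (Gr n) (fLab n))).card ≤ 2*n+5 := by
  classical
  have hsub : Finset.univ.image (ldWeight (Gr n) (fLab n)) ⊆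
      ((Finset.range (2*n)).image (fun ℓ => 5*n*n + 12*n + 5 + 2 * kk n + (2*n+2) + ℓ)) ∪
      {5*n*n + 12*n + 5 + 2*kk n + (3*n + 4*kk n),
       (5*n+1+4*kk n) + (2*n+3) + (n*(3*n+4) + kk n),
       (5*n+1+4*kk n) + (2*n+2) + (n*(2*n+4) + kk n),
       (5*n+1+4*kk n) + (2*n+2),
       (5*n+1+4*kk n) + (2*n+3)} := by
    intro y hy
    simp only [Finset.mem_image] at hy
    obtain ⟨v, _, rfl⟩ := hy
    rcases v with (_|⟨i,j⟩) | (b | ⟨b,m⟩)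
    · rw [wv_center]
      apply Finset.mem_union_right
      simp
    · rw [wv_leaf]
      have hi := i.isLt; have hj := j.isLt
      apply Finset.mem_union_left
      simp only [Finset.mem_image, Finset.mem_range]
      exact ⟨2*i.val + (1 - j.val), by omega, rfl⟩
    · apply Finset.mem_union_right
      cases b
      · rw [wv_a]; simp
      · rw [wv_b]; simp
    · apply Finset.mem_union_right
      rw [wv_bleaf]
      cases b <;> simp
  have h1 := Finset.card_le_card hsub
  have h2 := Finset.card_union_le
    ((Finset.range (2*n)).image (fun ℓ => 5*n*n + 12*n + 5 + 2 * kk n + (2*n+2) + ℓ))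
    ({5*n*n + 12*n + 5 + 2*kk n + (3*n + 4*kk n),
       (5*n+1+4*kk n) + (2*n+3) + (n*(3*n+4) + kk n),
       (5*n+1+4*kk n) + (2*n+2) + (n*(2*n+4) + kk n),
       (5*n+1+4*kk n) + (2*n+2),
       (5*n+1+4*kk n) + (2*n+3)} : Finset ℕ)
  have h3 := Finset.card_image_le (s := Finset.range (2*n))
    (f := fun ℓ => 5*n*n + 12*n + 5 + 2 * kk n + (2*n+2) + ℓ)
  rw [Finset.card_range] at h3
  have h4 : ({5*n*n + 12*n + 5 + 2*kk n + (3*n + 4*kk n),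
       (5*n+1+4*kk n) + (2*n+3) + (n*(3*n+4) + kk n),
       (5*n+1+4*kk n) + (2*n+2) + (n*(2*n+4) + kk n),
       (5*n+1+4*kk n) + (2*n+2),
       (5*n+1+4*kk n) + (2*n+3)} : Finset ℕ).card ≤ 5 := by
    apply le_trans (Finset.card_insert_le _ _)
    have := Finset.card_insert_le ((5*n+1+4*kk n) + (2*n+3) + (n*(3*n+4) + kk n))
      ({(5*n+1+4*kk n) + (2*n+2) + (n*(2*n+4) + kk n),
       (5*n+1+4*kk n) + (2*n+2),
       (5*n+1+4*kk n) + (2*n+3)} : Finset ℕ)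
    have h5 := Finset.card_insert_le ((5*n+1+4*kk n) + (2*n+2) + (n*(2*n+4) + kk n))
      ({(5*n+1+4*kk n) + (2*n+2),
       (5*n+1+4*kk n) + (2*n+3)} : Finset ℕ)
    have h6 := Finset.card_insert_le ((5*n+1+4*kk n) + (2*n+2))
      ({(5*n+1+4*kk n) + (2*n+3)} : Finset ℕ)
    have h7 := Finset.card_singleton ((5*n+1+4*kk n) + (2*n+3))
    omega
  omega

lemma lower_bound (hn : 1 ≤ n) (g : Vty n → ℕ) (hg : IsLDAL (Gr n) g) :
    2*n+5 ≤ (Finset.univ.image (ldWeight (Gr n) g)).card := by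
  classical
  obtain ⟨hbij, hadj⟩ := hg
  have hginj : Function.Injective g :=
    fun a b hab => hbij.injOn (Set.mem_univ a) (Set.mem_univ b) hab
  have hpos : ∀ v, 1 ≤ g v := fun v => (hbij.mapsTo (Set.mem_univ v)).1
  have i0 : Fin n := ⟨0, hn⟩
  set T : Finset (Vty n) :=
    (Finset.univ.image fun p : Fin n × Fin 2 => (Sum.inl (some p) : Vty n)) ∪
    {Sum.inl none, Sum.inr (Sum.inl false), Sum.inr (Sum.inl true),
     Sum.inr (Sum.inr (false, ⟨0, hn⟩)), Sum.inr (Sum.inr (true, ⟨0, hn⟩))} with hT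
  have hmemT : ∀ u ∈ T, (∃ p : Fin n × Fin 2, u = Sum.inl (some p)) ∨ u = Sum.inl none ∨
      u = Sum.inr (Sum.inl false) ∨ u = Sum.inr (Sum.inl true) ∨
      u = Sum.inr (Sum.inr (false, ⟨0, hn⟩)) ∨ u = Sum.inr (Sum.inr (true, ⟨0, hn⟩)) := by
    intro u hu
    rw [hT] at hu
    simp only [Finset.mem_union, Finset.mem_image, Finset.mem_insert, Finset.mem_singleton,
      Finset.mem_univ, true_and] at hu
    rcases hu with ⟨p, hp⟩ | h | h | h | h | h
    · exact Or.inl ⟨p, hp.symm⟩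
    all_goals tauto
  have hsumpos : 0 < ∑ i : Fin n, g (Sum.inr (Sum.inr (false, i))) :=
    Finset.sum_pos (fun i _ => hpos _) ⟨⟨0, hn⟩, Finset.mem_univ _⟩
  have hsumpos' : 0 < ∑ i : Fin n, g (Sum.inr (Sum.inr (true, i))) :=
    Finset.sum_pos (fun i _ => hpos _) ⟨⟨0, hn⟩, Finset.mem_univ _⟩
  have hinj : Set.InjOn (ldWeight (Gr n) g) ↑T := by
    intro u hu v hv heq
    have hu' := hmemT u (by simpa using hu)
    have hv' := hmemT v (by simpa using hv)
    clear hu hv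
    rcases hu' with ⟨⟨pi, pj⟩, rfl⟩ | rfl | rfl | rfl | rfl | rfl <;>
      rcases hv' with ⟨⟨qi, qj⟩, rfl⟩ | rfl | rfl | rfl | rfl | rfl
    -- u leaf
    · rw [weight_leaf, weight_leaf] at heq
      have h2 := Nat.add_left_cancel heq
      have h3 := hginj h2
      simp only [Sum.inl.injEq, Option.some.injEq, Prod.mk.injEq] at h3
      obtain ⟨h4, h5⟩ := h3
      rw [h4, pt_inj h5]
    · exact absurd heq (hadj ((join_adj_ll _ _ _ _).mpr (fr_adj_some_none _)))
    · exact absurd heq (hadj (join_adj_lr _ _ _ _))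
    · exact absurd heq (hadj (join_adj_lr _ _ _ _))
    · exact absurd heq (hadj (join_adj_lr _ _ _ _))
    · exact absurd heq (hadj (join_adj_lr _ _ _ _))
    -- u = center
    · exact absurd heq (hadj ((join_adj_ll _ _ _ _).mpr (fr_adj_none_some _)))
    · rfl
    · exact absurd heq (hadj (join_adj_lr _ _ _ _))
    · exact absurd heq (hadj (join_adj_lr _ _ _ _))
    · exact absurd heq (hadj (join_adj_lr _ _ _ _))
    · exact absurd heq (hadj (join_adj_lr _ _ _ _))
    -- u = a (false center)
    · exact absurd heq (hadj (join_adj_rl _ _ _ _))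
    · exact absurd heq (hadj (join_adj_rl _ _ _ _))
    · rfl
    · exact absurd heq (hadj ((join_adj_rr _ _ _ _).mpr ((bs_adj_cc _ _).mpr (by simp))))
    · exact absurd heq (hadj ((join_adj_rr _ _ _ _).mpr ((bs_adj_cl _ _ _).mpr rfl)))
    · rw [weight_bcenter, weight_bleaf] at heq
      simp only [Bool.not_false] at heq
      exact absurd heq (by intro hh; omega)
    -- u = b (true center)
    · exact absurd heq (hadj (join_adj_rl _ _ _ _))
    · exact absurd heq (hadj (join_adj_rl _ _ _ _))
    · exact absurd heq (hadj ((join_adj_rr _ _ _ _).mpr ((bs_adj_cc _ _).mpr (by simp))))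
    · rfl
    · rw [weight_bcenter, weight_bleaf] at heq
      simp only [Bool.not_true] at heq
      exact absurd heq (by intro hh; omega)
    · exact absurd heq (hadj ((join_adj_rr _ _ _ _).mpr ((bs_adj_cl _ _ _).mpr rfl)))
    -- u = false leaf
    · exact absurd heq (hadj (join_adj_rl _ _ _ _))
    · exact absurd heq (hadj (join_adj_rl _ _ _ _))
    · exact absurd heq (hadj ((join_adj_rr _ _ _ _).mpr ((bs_adj_lc _ _ _).mpr rfl)))
    · rw [weight_bleaf, weight_bcenter] at heq
      simp only [Bool.not_true] at heq
      exact absurd heq (by intro hh; omega)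
    · rfl
    · rw [weight_bleaf, weight_bleaf] at heq
      have h2 := Nat.add_left_cancel heq
      have h3 := hginj h2
      simp at h3
    -- u = true leaf
    · exact absurd heq (hadj (join_adj_rl _ _ _ _))
    · exact absurd heq (hadj (join_adj_rl _ _ _ _))
    · rw [weight_bleaf, weight_bcenter] at heq
      simp only [Bool.not_false] at heq
      exact absurd heq (by intro hh; omega)
    · exact absurd heq (hadj ((join_adj_rr _ _ _ _).mpr ((bs_adj_lc _ _ _).mpr rfl)))
    · rw [weight_bleaf, weight_bleaf] at heq
      have h2 := Nat.add_left_cancel heq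
      have h3 := hginj h2
      simp at h3
    · rfl
  have hTcard : T.card = 2*n+5 := by
    rw [hT]
    rw [Finset.card_union_of_disjoint (by
      rw [Finset.disjoint_left]
      rintro x hx
      simp only [Finset.mem_image, Finset.mem_univ, true_and] at hx
      obtain ⟨p, rfl⟩ := hx
      simp)]
    rw [Finset.card_image_of_injective _ (fun p q h => by simpa using h)]
    rw [Finset.card_univ]
    simp only [Fintype.card_prod, Fintype.card_fin]
    rw [Finset.card_insert_of_notMem (by simp), Finset.card_insert_of_notMem (by simp),
      Finset.card_insert_of_notMem (by simp), Finset.card_insert_of_notMem (by simp),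
      Finset.card_singleton]
    omega
  have h1 : (T.image (ldWeight (Gr n) g)).card = T.card :=
    Finset.card_image_of_injOn hinj
  have h2 : T.image (ldWeight (Gr n) g) ⊆ Finset.univ.image (ldWeight (Gr n) g) :=
    Finset.image_subset_image (Finset.subset_univ T)
  have h3 := Finset.card_le_card h2
  omega

end Bounds
theorem stmt_8 (n : ℕ) (hn : 1 ≤ n) :
    chiLD (graphJoin (friendship n) (bistar n)) = 2 * n + 5 := by
  have hldal : IsLDAL (Gr n) (fLab n) := fLab_ldal hn
  have hcard : (Finset.univ.image (ldWeight (Gr n) (fLab n))).card = 2*n+5 :=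
    le_antisymm (upper_bound hn) (lower_bound hn _ hldal)
  have hmem : (2*n+5) ∈ {k | ∃ f : Vty n → ℕ, IsLDAL (Gr n) f ∧
      (Finset.univ.image (ldWeight (Gr n) f)).card = k} := ⟨fLab n, hldal, hcard⟩
  rw [chiLD]
  apply le_antisymm
  · exact Nat.sInf_le hmem
  · apply le_csInf ⟨_, hmem⟩
    rintro k ⟨g, hg, rfl⟩
    exact lower_bound hn g hg
end

section
/- Let n ≥ 3 be odd and m ≥ 1. Define n × m matrices B and C by: b_{1,j} = j, b_{2,j} = j+m, b_{3,j} = 4m - (2j-2), b_{i,j} = 6m + 2j - 1 + 2m(i-4) for even i ≥ 4, b_{i,j} = 2im - (2j-1) for odd i ≥ 5; and c_{1,j} = 4m+1-2j, c_{2,j} = 4m+j, c_{3,j} = 5m+j, c_{i,j} = 6m+2j+2m(i-4) for even i ≥ 4, c_{i,j} = 2im-(2j-2) for odd i ≥ 5. Then the entries of B and C together form a bijective arrangement of {1,...,2mn}, every column of B has sum mn² - 4m + 2, and every column of C has sum mn² + 4m + n - 2. -/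
open Finset

theorem stmt10_aux (m : ℕ) (hm : 1 ≤ m) (B C : ℕ → ℕ → ℕ)
    (hB : ∀ i j, B i j =
      if i = 1 then j
      else if i = 2 then j + m
      else if i = 3 then 4 * m - (2 * j - 2)
      else if i % 2 = 0 then 6 * m + 2 * j - 1 + 2 * m * (i - 4)
      else 2 * i * m - (2 * j - 1))
    (hC : ∀ i j, C i j =
      if i = 1 then 4 * m + 1 - 2 * j
      else if i = 2 then 4 * m + j
      else if i = 3 then 5 * m + j
      else if i % 2 = 0 then 6 * m + 2 * j + 2 * m * (i - 4)
      else 2 * i * m - (2 * j - 2)) :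
    ∀ k : ℕ,
    (∀ i j, 1 ≤ i → i ≤ 2*k+3 → 1 ≤ j → j ≤ m →
       1 ≤ B i j ∧ B i j ≤ 2*m*(2*k+3) ∧ 1 ≤ C i j ∧ C i j ≤ 2*m*(2*k+3)) ∧
    (∀ i j i' j', 1 ≤ i → i ≤ 2*k+3 → 1 ≤ j → j ≤ m → 1 ≤ i' → i' ≤ 2*k+3 → 1 ≤ j' → j' ≤ m →
       (B i j = B i' j' → i = i' ∧ j = j') ∧ (C i j = C i' j' → i = i' ∧ j = j') ∧
       B i j ≠ C i' j') ∧
    (∀ t, 1 ≤ t → t ≤ 2*m*(2*k+3) →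
       (∃ i j, 1 ≤ i ∧ i ≤ 2*k+3 ∧ 1 ≤ j ∧ j ≤ m ∧ B i j = t) ∨
       (∃ i j, 1 ≤ i ∧ i ≤ 2*k+3 ∧ 1 ≤ j ∧ j ≤ m ∧ C i j = t)) ∧
    (∀ j, 1 ≤ j → j ≤ m →
       (∑ i ∈ Finset.Icc 1 (2*k+3), B i j) = m*(2*k+3)^2 - 4*m + 2 ∧
       (∑ i ∈ Finset.Icc 1 (2*k+3), C i j) = m*(2*k+3)^2 + 4*m + (2*k+3) - 2) := by
  have eB1 : ∀ j, B 1 j = j := fun j => by rw [hB]; norm_num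
  have eB2 : ∀ j, B 2 j = j + m := fun j => by rw [hB]; norm_num
  have eB3 : ∀ j, B 3 j = 4*m - (2*j-2) := fun j => by rw [hB]; norm_num
  have eBE : ∀ i j, 4 ≤ i → i % 2 = 0 → B i j = 6*m + 2*j - 1 + 2*m*(i-4) := by
    intro i j h4 he
    rw [hB, if_neg (by omega), if_neg (by omega), if_neg (by omega), if_pos he]
  have eBO : ∀ i j, 5 ≤ i → i % 2 = 1 → B i j = 2*i*m - (2*j-1) := by
    intro i j h5 ho
    rw [hB, if_neg (by omega), if_neg (by omega), if_neg (by omega), if_neg (by omega)]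
  have eC1 : ∀ j, C 1 j = 4*m + 1 - 2*j := fun j => by rw [hC]; norm_num
  have eC2 : ∀ j, C 2 j = 4*m + j := fun j => by rw [hC]; norm_num
  have eC3 : ∀ j, C 3 j = 5*m + j := fun j => by rw [hC]; norm_num
  have eCE : ∀ i j, 4 ≤ i → i % 2 = 0 → C i j = 6*m + 2*j + 2*m*(i-4) := by
    intro i j h4 he
    rw [hC, if_neg (by omega), if_neg (by omega), if_neg (by omega), if_pos he]
  have eCO : ∀ i j, 5 ≤ i → i % 2 = 1 → C i j = 2*i*m - (2*j-2) := by
    intro i j h5 ho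
    rw [hC, if_neg (by omega), if_neg (by omega), if_neg (by omega), if_neg (by omega)]
  intro k
  induction k with
  | zero =>
    have h6 : 2*m*(2*0+3) = 6*m := by ring
    refine ⟨?_, ?_, ?_, ?_⟩
    · intro i j hi1 hi2 hj1 hj2
      rw [h6]
      interval_cases i <;> simp only [eB1, eB2, eB3, eC1, eC2, eC3] <;> omega
    · intro i j i' j' hi1 hi2 hj1 hj2 hi1' hi2' hj1' hj2'
      interval_cases i <;> interval_cases i' <;>
        simp only [eB1, eB2, eB3, eC1, eC2, eC3] <;>
        refine ⟨fun h => ?_, fun h => ?_, fun h => ?_⟩ <;> first | omega | (simp only [true_and]; omega)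
    · intro t ht1 ht2
      rw [h6] at ht2
      by_cases h1 : t ≤ m
      · exact Or.inl ⟨1, t, by omega, by omega, by omega, by omega, by rw [eB1]⟩
      by_cases h2 : t ≤ 2*m
      · exact Or.inl ⟨2, t - m, by omega, by omega, by omega, by omega, by rw [eB2]; omega⟩
      by_cases h3 : t ≤ 4*m
      · by_cases hp : t % 2 = 0
        · exact Or.inl ⟨3, (4*m+2-t)/2, by omega, by omega, by omega, by omega,
            by rw [eB3]; omega⟩
        · exact Or.inr ⟨1, (4*m+1-t)/2, by omega, by omega, by omega, by omega,
            by rw [eC1]; omega⟩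
      by_cases h4 : t ≤ 5*m
      · exact Or.inr ⟨2, t - 4*m, by omega, by omega, by omega, by omega, by rw [eC2]; omega⟩
      · exact Or.inr ⟨3, t - 5*m, by omega, by omega, by omega, by omega, by rw [eC3]; omega⟩
    · intro j hj1 hj2
      have hIcc : Finset.Icc 1 (2*0+3) = {1, 2, 3} := by decide
      have e1 : m*(2*0+3)^2 = 9*m := by ring
      rw [hIcc, Finset.sum_insert (by decide), Finset.sum_insert (by decide),
        Finset.sum_singleton, Finset.sum_insert (by decide), Finset.sum_insert (by decide),
        Finset.sum_singleton, eB1, eB2, eB3, eC1, eC2, eC3, e1]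
      omega
  | succ k IH =>
    obtain ⟨IHb, IHi, IHs, IHsum⟩ := IH
    have hb : 2*m*(2*k+3) = 4*(m*k)+6*m := by ring
    have hb2 : 2*m*(2*(k+1)+3) = 4*(m*k)+10*m := by ring
    have vBE : ∀ j, B (2*k+4) j = 4*(m*k) + 6*m + 2*j - 1 := by
      intro j
      rw [eBE _ _ (by omega) (by omega), show 2*k+4-4 = 2*k by omega,
        show 2*m*(2*k) = 4*(m*k) by ring]
      omega
    have vBO : ∀ j, B (2*k+5) j = 4*(m*k) + 10*m - (2*j-1) := by
      intro j
      rw [eBO _ _ (by omega) (by omega), show 2*(2*k+5)*m = 4*(m*k)+10*m by ring]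
    have vCE : ∀ j, C (2*k+4) j = 4*(m*k) + 6*m + 2*j := by
      intro j
      rw [eCE _ _ (by omega) (by omega), show 2*k+4-4 = 2*k by omega,
        show 2*m*(2*k) = 4*(m*k) by ring]
      omega
    have vCO : ∀ j, C (2*k+5) j = 4*(m*k) + 10*m - (2*j-2) := by
      intro j
      rw [eCO _ _ (by omega) (by omega), show 2*(2*k+5)*m = 4*(m*k)+10*m by ring]
    refine ⟨?_, ?_, ?_, ?_⟩
    · intro i j hi1 hi2 hj1 hj2
      rw [hb2]
      rcases (show i ≤ 2*k+3 ∨ i = 2*k+4 ∨ i = 2*k+5 by omega) with h|h|h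
      · have h2 := IHb i j hi1 h hj1 hj2
        rw [hb] at h2
        omega
      · subst h; rw [vBE, vCE]; omega
      · subst h; rw [vBO, vCO]; omega
    · intro i j i' j' hi1 hi2 hj1 hj2 hi1' hi2' hj1' hj2'
      rcases (show i ≤ 2*k+3 ∨ i = 2*k+4 ∨ i = 2*k+5 by omega) with h|h|h
      · rcases (show i' ≤ 2*k+3 ∨ i' = 2*k+4 ∨ i' = 2*k+5 by omega) with h'|h'|h'
        · exact IHi i j i' j' hi1 h hj1 hj2 hi1' h' hj1' hj2'
        · subst h'
          have hbnd := IHb i j hi1 h hj1 hj2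
          rw [hb] at hbnd
          rw [vBE j', vCE j']
          refine ⟨fun hE => ?_, fun hE => ?_, fun hE => ?_⟩ <;> omega
        · subst h'
          have hbnd := IHb i j hi1 h hj1 hj2
          rw [hb] at hbnd
          rw [vBO j', vCO j']
          refine ⟨fun hE => ?_, fun hE => ?_, fun hE => ?_⟩ <;> omega
      · subst h
        rcases (show i' ≤ 2*k+3 ∨ i' = 2*k+4 ∨ i' = 2*k+5 by omega) with h'|h'|h'
        · have hbnd := IHb i' j' hi1' h' hj1' hj2'
          rw [hb] at hbnd
          rw [vBE j, vCE j]
          refine ⟨fun hE => ?_, fun hE => ?_, fun hE => ?_⟩ <;> omega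
        · subst h'
          rw [vBE j, vBE j', vCE j, vCE j']
          refine ⟨fun hE => ?_, fun hE => ?_, fun hE => ?_⟩ <;> omega
        · subst h'
          rw [vBE j, vBO j', vCE j, vCO j']
          refine ⟨fun hE => ?_, fun hE => ?_, fun hE => ?_⟩ <;> omega
      · subst h
        rcases (show i' ≤ 2*k+3 ∨ i' = 2*k+4 ∨ i' = 2*k+5 by omega) with h'|h'|h'
        · have hbnd := IHb i' j' hi1' h' hj1' hj2'
          rw [hb] at hbnd
          rw [vBO j, vCO j]
          refine ⟨fun hE => ?_, fun hE => ?_, fun hE => ?_⟩ <;> omega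
        · subst h'
          rw [vBO j, vBE j', vCO j, vCE j']
          refine ⟨fun hE => ?_, fun hE => ?_, fun hE => ?_⟩ <;> omega
        · subst h'
          rw [vBO j, vBO j', vCO j, vCO j']
          refine ⟨fun hE => ?_, fun hE => ?_, fun hE => ?_⟩ <;> omega
    · intro t ht1 ht2
      rw [hb2] at ht2
      by_cases hold : t ≤ 4*(m*k)+6*m
      · rcases IHs t ht1 (by rw [hb]; omega) with ⟨i,j,p1,p2,p3,p4,p5⟩ | ⟨i,j,p1,p2,p3,p4,p5⟩
        · exact Or.inl ⟨i, j, p1, by omega, p3, p4, p5⟩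
        · exact Or.inr ⟨i, j, p1, by omega, p3, p4, p5⟩
      · by_cases hp : t % 2 = 1
        · by_cases hh : t ≤ 4*(m*k)+8*m
          · exact Or.inl ⟨2*k+4, (t+1-(4*(m*k)+6*m))/2, by omega, by omega, by omega,
              by omega, by rw [vBE]; omega⟩
          · exact Or.inl ⟨2*k+5, (4*(m*k)+10*m+1-t)/2, by omega, by omega, by omega,
              by omega, by rw [vBO]; omega⟩
        · by_cases hh : t ≤ 4*(m*k)+8*m
          · exact Or.inr ⟨2*k+4, (t-(4*(m*k)+6*m))/2, by omega, by omega, by omega,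
              by omega, by rw [vCE]; omega⟩
          · exact Or.inr ⟨2*k+5, (4*(m*k)+10*m+2-t)/2, by omega, by omega, by omega,
              by omega, by rw [vCO]; omega⟩
    · intro j hj1 hj2
      have hIcc : Finset.Icc 1 (2*(k+1)+3)
          = insert (2*k+5) (insert (2*k+4) (Finset.Icc 1 (2*k+3))) := by
        ext x; simp only [Finset.mem_Icc, Finset.mem_insert]; omega
      have hs := IHsum j hj1 hj2
      have e1 : m*(2*k+3)^2 = 4*(m*(k*k)) + 12*(m*k) + 9*m := by ring
      have e2 : m*(2*(k+1)+3)^2 = 4*(m*(k*k)) + 20*(m*k) + 25*m := by ring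
      constructor
      · rw [hIcc, Finset.sum_insert (by simp only [Finset.mem_insert, Finset.mem_Icc]; omega),
          Finset.sum_insert (by simp only [Finset.mem_Icc]; omega), hs.1, vBO, vBE, e1, e2]
        omega
      · rw [hIcc, Finset.sum_insert (by simp only [Finset.mem_insert, Finset.mem_Icc]; omega),
          Finset.sum_insert (by simp only [Finset.mem_Icc]; omega), hs.2, vCO, vCE, e1, e2]
        omega


theorem stmt_10 (n m : ℕ) (hn : 3 ≤ n) (hno : Odd n) (hm : 1 ≤ m)
    (B C : ℕ → ℕ → ℕ)
    (hB : ∀ i j, B i j =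
      if i = 1 then j
      else if i = 2 then j + m
      else if i = 3 then 4 * m - (2 * j - 2)
      else if i % 2 = 0 then 6 * m + 2 * j - 1 + 2 * m * (i - 4)
      else 2 * i * m - (2 * j - 1))
    (hC : ∀ i j, C i j =
      if i = 1 then 4 * m + 1 - 2 * j
      else if i = 2 then 4 * m + j
      else if i = 3 then 5 * m + j
      else if i % 2 = 0 then 6 * m + 2 * j + 2 * m * (i - 4)
      else 2 * i * m - (2 * j - 2)) :
    Set.BijOn (Sum.elim (fun p : ℕ × ℕ => B p.1 p.2) (fun p : ℕ × ℕ => C p.1 p.2))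
      (Sum.inl '' (Set.Icc 1 n ×ˢ Set.Icc 1 m) ∪ Sum.inr '' (Set.Icc 1 n ×ˢ Set.Icc 1 m))
      (Set.Icc 1 (2 * m * n)) ∧
    (∀ j ∈ Finset.Icc 1 m, ∑ i ∈ Finset.Icc 1 n, B i j = m * n ^ 2 - 4 * m + 2) ∧
    (∀ j ∈ Finset.Icc 1 m, ∑ i ∈ Finset.Icc 1 n, C i j = m * n ^ 2 + 4 * m + n - 2) := by
  obtain ⟨p0, hp0⟩ := hno
  obtain ⟨k, rfl⟩ : ∃ k, n = 2*k+3 := ⟨(n-3)/2, by omega⟩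
  obtain ⟨Pb, Pi, Ps, Psum⟩ := stmt10_aux m hm B C hB hC k
  refine ⟨⟨?_, ?_, ?_⟩, ?_, ?_⟩
  · rintro x (⟨p, hp, rfl⟩ | ⟨p, hp, rfl⟩) <;>
      simp only [Set.mem_prod, Set.mem_Icc] at hp <;>
      simp only [Sum.elim_inl, Sum.elim_inr, Set.mem_Icc]
    · have h := Pb p.1 p.2 hp.1.1 hp.1.2 hp.2.1 hp.2.2
      exact ⟨h.1, h.2.1⟩
    · have h := Pb p.1 p.2 hp.1.1 hp.1.2 hp.2.1 hp.2.2
      exact ⟨h.2.2.1, h.2.2.2⟩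
  · rintro x (⟨p, hp, rfl⟩ | ⟨p, hp, rfl⟩) y (⟨q, hq, rfl⟩ | ⟨q, hq, rfl⟩) hE <;>
      simp only [Set.mem_prod, Set.mem_Icc] at hp hq <;>
      simp only [Sum.elim_inl, Sum.elim_inr] at hE <;>
      have h := Pi p.1 p.2 q.1 q.2 hp.1.1 hp.1.2 hp.2.1 hp.2.2 hq.1.1 hq.1.2 hq.2.1 hq.2.2
    · obtain ⟨h1, h2⟩ := h.1 hE
      exact congrArg Sum.inl (Prod.ext h1 h2)
    · exact absurd hE h.2.2
    · have h' := Pi q.1 q.2 p.1 p.2 hq.1.1 hq.1.2 hq.2.1 hq.2.2 hp.1.1 hp.1.2 hp.2.1 hp.2.2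
      exact absurd hE.symm h'.2.2
    · obtain ⟨h1, h2⟩ := h.2.1 hE
      exact congrArg Sum.inr (Prod.ext h1 h2)
  · intro t ht
    simp only [Set.mem_Icc] at ht
    rcases Ps t ht.1 ht.2 with ⟨i, j, q1, q2, q3, q4, q5⟩ | ⟨i, j, q1, q2, q3, q4, q5⟩
    · refine ⟨Sum.inl (i, j), Or.inl ⟨(i, j), ?_, rfl⟩, q5⟩
      simp only [Set.mem_prod, Set.mem_Icc]
      exact ⟨⟨q1, q2⟩, q3, q4⟩
    · refine ⟨Sum.inr (i, j), Or.inr ⟨(i, j), ?_, rfl⟩, q5⟩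
      simp only [Set.mem_prod, Set.mem_Icc]
      exact ⟨⟨q1, q2⟩, q3, q4⟩
  · intro j hj
    rw [Finset.mem_Icc] at hj
    exact (Psum j hj.1 hj.2).1
  · intro j hj
    rw [Finset.mem_Icc] at hj
    exact (Psum j hj.1 hj.2).2
end

section
/- For positive integers m and n > 1, and H an r-regular graph of order n admitting a local distance antimagic labeling, χ_ld(K_m[H]) ≤ m · χ_ld(H). In particular, in the labeling g(y_i^j) = f(y_i) + (j-1)n built from an optimal labeling f of H, the weight of vertex y_i^j equals n(m-1)(nm+n+1)/2 + w_f(y_i) - (j-1)n(n-r). -/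
open Finset

section Aux

open SimpleGraph

variable {V : Type*} [Fintype V] {H : SimpleGraph V} [DecidableRel H.Adj]

lemma ldWeight_eq_sum_neighbors (f : V → ℕ) (v : V) :
    ldWeight H f v = ∑ x ∈ H.neighborFinset v, f x := by
  classical
  unfold ldWeight
  rw [show H.neighborFinset v = Finset.univ.filter (H.Adj v) from by ext x; simp,
    Finset.sum_filter]
  exact Finset.sum_congr rfl fun x _ => by
    by_cases h : H.Adj v x
    · rw [if_pos h, if_pos h]
    · rw [if_neg h, if_neg h]

lemma image_labels {f : V → ℕ} {n : ℕ} (hcard : Fintype.card V = n)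
    (hb : Set.BijOn f Set.univ (Set.Icc 1 n)) :
    Finset.univ.image f = Finset.Icc 1 n := by
  subst hcard
  ext a
  simp only [Finset.mem_image, Finset.mem_Icc, Finset.mem_univ, true_and]
  constructor
  · rintro ⟨x, rfl⟩
    exact hb.mapsTo (Set.mem_univ x)
  · intro ha
    obtain ⟨x, -, rfl⟩ := hb.surjOn (Set.mem_Icc.mpr ha)
    exact ⟨x, rfl⟩

lemma two_mul_sum_labels {f : V → ℕ} {n : ℕ} (hcard : Fintype.card V = n)
    (hb : Set.BijOn f Set.univ (Set.Icc 1 n)) :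
    2 * ∑ x : V, f x = n * (n + 1) := by
  have himg := image_labels hcard hb
  have h1 : ∑ a ∈ Finset.univ.image f, a = ∑ x : V, f x :=
    Finset.sum_image (fun x _ y _ h => hb.injOn (Set.mem_univ x) (Set.mem_univ y) h)
  rw [himg] at h1
  have h3 : ∀ N : ℕ, ∑ a ∈ Finset.Icc 1 N, a = ∑ a ∈ Finset.range (N + 1), a := by
    intro N
    induction N with
    | zero => simp
    | succ k ih => rw [Finset.sum_range_succ, ← ih, Finset.sum_Icc_succ_top (by omega)]
  have h3' := h3 n
  have h4 : (∑ a ∈ Finset.range (n + 1), a) * 2 = n * (n + 1) := by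
    rw [Finset.sum_range_id_mul_two, Nat.succ_sub_one, Nat.mul_comm]
  omega

lemma key_formula {m n r : ℕ} (hm : 0 < m) (hn : 1 < n) (hcard : Fintype.card V = n)
    (hreg : H.IsRegularOfDegree r) (f : V → ℕ)
    (hb : Set.BijOn f Set.univ (Set.Icc 1 n)) (j : Fin m) (y : V) :
    2 * (ldWeight (lexProd (⊤ : SimpleGraph (Fin m)) H)
          (fun p => f p.2 + (p.1 : ℕ) * n) (j, y) + (j : ℕ) * n * (n - r)) =
      n * (m - 1) * (n * m + n + 1) + 2 * ldWeight H f y := by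
  classical
  have hrn : r ≤ n := by
    have h1 := hreg y
    have h2 := H.degree_lt_card_verts y
    omega
  set S := ∑ x : V, f x with hSdef
  set K := ∑ k ∈ Finset.univ.erase j, (k : ℕ) with hKdef
  set w := ldWeight H f y with hwdef
  have hS : 2 * S = n * (n + 1) := two_mul_sum_labels hcard hb
  have hK : 2 * K + 2 * (j : ℕ) = m * (m - 1) := by
    have h1 : (j : ℕ) + K = ∑ k : Fin m, (k : ℕ) :=
      Finset.add_sum_erase _ (fun k : Fin m => (k : ℕ)) (Finset.mem_univ j)
    have h2 : ∑ k : Fin m, (k : ℕ) = ∑ i ∈ Finset.range m, i :=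
      Fin.sum_univ_eq_sum_range (fun i => i) m
    have h3 := Finset.sum_range_id_mul_two m
    omega
  have hW : ldWeight (lexProd (⊤ : SimpleGraph (Fin m)) H)
        (fun p => f p.2 + (p.1 : ℕ) * n) (j, y)
      = (m - 1) * S + n * n * K + w + r * ((j : ℕ) * n) := by
    have h0 : ldWeight (lexProd (⊤ : SimpleGraph (Fin m)) H)
          (fun p => f p.2 + (p.1 : ℕ) * n) (j, y)
        = ∑ k : Fin m, ∑ z : V,
            (if (lexProd (⊤ : SimpleGraph (Fin m)) H).Adj (j, y) (k, z)
              then f z + (k : ℕ) * n else 0) := by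
      unfold ldWeight
      rw [Fintype.sum_prod_type]
    rw [h0, ← Finset.add_sum_erase Finset.univ
      (fun k : Fin m => ∑ z : V,
        (if (lexProd (⊤ : SimpleGraph (Fin m)) H).Adj (j, y) (k, z)
          then f z + (k : ℕ) * n else 0)) (Finset.mem_univ j)]
    have hinner_j : (∑ z : V,
        (if (lexProd (⊤ : SimpleGraph (Fin m)) H).Adj (j, y) (j, z)
          then f z + (j : ℕ) * n else 0)) = w + r * ((j : ℕ) * n) := by
      have step : ∀ z : V,
          (if (lexProd (⊤ : SimpleGraph (Fin m)) H).Adj (j, y) (j, z)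
            then f z + (j : ℕ) * n else 0)
          = (if H.Adj y z then f z else 0) + (if H.Adj y z then (j : ℕ) * n else 0) := by
        intro z
        by_cases h : H.Adj y z
        · rw [if_pos (show (lexProd (⊤ : SimpleGraph (Fin m)) H).Adj (j, y) (j, z) from
            Or.inr ⟨rfl, h⟩), if_pos h, if_pos h]
        · rw [if_neg ?_, if_neg h, if_neg h]
          rintro (ht | ⟨-, hh⟩)
          · exact (⊤ : SimpleGraph (Fin m)).irrefl ht
          · exact h hh
      rw [Finset.sum_congr rfl fun z _ => step z, Finset.sum_add_distrib]
      congr 1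
      · rw [hwdef]
        unfold ldWeight
        refine Finset.sum_congr rfl fun z _ => ?_
        by_cases h : H.Adj y z
        · rw [if_pos h, if_pos h]
        · rw [if_neg h, if_neg h]
      · rw [← Finset.sum_filter]
        have hfil : Finset.univ.filter (H.Adj y) = H.neighborFinset y := by
          ext x; simp [SimpleGraph.mem_neighborFinset]
        rw [hfil, Finset.sum_const, smul_eq_mul]
        congr 1
        exact hreg y
    have hinner_k : ∀ k ∈ Finset.univ.erase j,
        (∑ z : V, (if (lexProd (⊤ : SimpleGraph (Fin m)) H).Adj (j, y) (k, z)
          then f z + (k : ℕ) * n else 0)) = S + n * ((k : ℕ) * n) := by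
      intro k hk
      have hkj : j ≠ k := (Finset.ne_of_mem_erase hk).symm
      have hstep : ∀ z : V,
          (if (lexProd (⊤ : SimpleGraph (Fin m)) H).Adj (j, y) (k, z)
            then f z + (k : ℕ) * n else 0) = f z + (k : ℕ) * n :=
        fun z => if_pos (show (lexProd (⊤ : SimpleGraph (Fin m)) H).Adj (j, y) (k, z) from
          Or.inl (by simpa using hkj))
      rw [Finset.sum_congr rfl fun z _ => hstep z, Finset.sum_add_distrib,
        Finset.sum_const, smul_eq_mul, Finset.card_univ, hcard, ← hSdef]
    rw [hinner_j, Finset.sum_congr rfl hinner_k, Finset.sum_add_distrib,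
      Finset.sum_const, smul_eq_mul, Finset.card_erase_of_mem (Finset.mem_univ j),
      Finset.card_univ, Fintype.card_fin]
    have hsum2 : (∑ k ∈ Finset.univ.erase j, n * ((k : ℕ) * n)) = n * n * K := by
      rw [hKdef, Finset.mul_sum]
      exact Finset.sum_congr rfl fun k _ => by ring
    rw [hsum2]
    ring
  have hm1 : 1 ≤ m := hm
  zify [hrn, hm1] at hW hK ⊢
  have hS' : (2 : ℤ) * (S : ℤ) = n * (n + 1) := by exact_mod_cast hS
  linear_combination 2 * hW + ((m : ℤ) - 1) * hS' + (n : ℤ) * (n : ℤ) * hK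

lemma ldWeight_lt {f : V → ℕ} {n r : ℕ} (hn : 1 < n) (hcard : Fintype.card V = n)
    (hreg : H.IsRegularOfDegree r) (hb : Set.BijOn f Set.univ (Set.Icc 1 n)) (y z : V) :
    ldWeight H f y < ldWeight H f z + n * (n - r) := by
  classical
  have hrn : r < n := by
    have h1 := hreg y
    have h2 := H.degree_lt_card_verts y
    omega
  have hf1 : ∀ x : V, 1 ≤ f x ∧ f x ≤ n := fun x => hb.mapsTo (Set.mem_univ x)
  rw [ldWeight_eq_sum_neighbors, ldWeight_eq_sum_neighbors]
  set Ny := H.neighborFinset y with hNy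
  set Nz := H.neighborFinset z with hNz
  have hsy : ∑ x ∈ Ny ∩ Nz, f x + ∑ x ∈ Ny \ Nz, f x = ∑ x ∈ Ny, f x :=
    Finset.sum_inter_add_sum_sdiff _ _ _
  have hsz : ∑ x ∈ Ny ∩ Nz, f x + ∑ x ∈ Nz \ Ny, f x = ∑ x ∈ Nz, f x := by
    rw [Finset.inter_comm]
    exact Finset.sum_inter_add_sum_sdiff _ _ _
  have hcy : (Ny \ Nz).card + (Ny ∩ Nz).card = r := by
    rw [Finset.card_sdiff_add_card_inter]
    exact hreg y
  have hcz : (Nz \ Ny).card + (Ny ∩ Nz).card = r := by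
    rw [Finset.inter_comm, Finset.card_sdiff_add_card_inter]
    exact hreg z
  have hsub : Ny \ Nz ⊆ Nzᶜ := fun x hx => Finset.mem_compl.mpr (Finset.mem_sdiff.mp hx).2
  have hcc : Nzᶜ.card = n - r := by
    rw [Finset.card_compl, hcard]
    have : Nz.card = r := hreg z
    rw [this]
  have ht : (Ny \ Nz).card ≤ n - r := hcc ▸ Finset.card_le_card hsub
  have hub : ∑ x ∈ Ny \ Nz, f x ≤ (Ny \ Nz).card * n := by
    have := Finset.sum_le_card_nsmul (Ny \ Nz) f n (fun x _ => (hf1 x).2)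
    simpa [smul_eq_mul] using this
  have hlb : (Nz \ Ny).card ≤ ∑ x ∈ Nz \ Ny, f x := by
    have := Finset.card_nsmul_le_sum (Nz \ Ny) f 1 (fun x _ => (hf1 x).1)
    simpa using this
  have main : ∑ x ∈ Ny \ Nz, f x < ∑ x ∈ Nz \ Ny, f x + n * (n - r) := by
    have hq : 0 < n * (n - r) := Nat.mul_pos (by omega) (by omega)
    have h1 : (Ny \ Nz).card * n ≤ (n - r) * n := Nat.mul_le_mul_right _ ht
    have h2 : (n - r) * n = n * (n - r) := Nat.mul_comm _ _
    rcases Nat.eq_zero_or_pos (Ny \ Nz).card with h0 | hp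
    · rw [h0, zero_mul] at hub
      omega
    · have h3 : (Nz \ Ny).card = (Ny \ Nz).card := by omega
      omega
  omega

end Aux

theorem stmt_18 {V : Type*} [Fintype V] (H : SimpleGraph V) [DecidableRel H.Adj]
    (m n r : ℕ) (hm : 0 < m) (hn : 1 < n) (hcard : Fintype.card V = n)
    (hreg : H.IsRegularOfDegree r)
    (hex : ∃ f, IsLDAL H f) :
    chiLD (lexProd (⊤ : SimpleGraph (Fin m)) H) ≤ m * chiLD H ∧
    ∀ f : V → ℕ, IsLDAL H f →
      (Finset.univ.image (ldWeight H f)).card = chiLD H →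
      ∀ (j : Fin m) (y : V),
        2 * (ldWeight (lexProd (⊤ : SimpleGraph (Fin m)) H)
              (fun p => f p.2 + (p.1 : ℕ) * n) (j, y) + (j : ℕ) * n * (n - r)) =
          n * (m - 1) * (n * m + n + 1) + 2 * ldWeight H f y := by
  classical
  have hV : Nonempty V := Fintype.card_pos_iff.mp (by omega)
  have hrltn : r < n := by
    obtain ⟨y0⟩ := hV
    have h1 := hreg y0
    have h2 := H.degree_lt_card_verts y0
    omega
  constructor
  · have hset : {k | ∃ f, IsLDAL H f ∧ (Finset.univ.image (ldWeight H f)).card = k}.Nonempty := by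
      obtain ⟨f0, hf0⟩ := hex
      exact ⟨_, f0, hf0, rfl⟩
    obtain ⟨f, hf, hfc⟩ := Nat.sInf_mem hset
    have hbj : Set.BijOn f Set.univ (Set.Icc 1 n) := by rw [← hcard]; exact hf.1
    have hf1 : ∀ x : V, 1 ≤ f x ∧ f x ≤ n := fun x => hbj.mapsTo (Set.mem_univ x)
    have hkey : ∀ (j : Fin m) (y : V),
        2 * (ldWeight (lexProd (⊤ : SimpleGraph (Fin m)) H)
              (fun p => f p.2 + (p.1 : ℕ) * n) (j, y) + (j : ℕ) * n * (n - r)) =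
          n * (m - 1) * (n * m + n + 1) + 2 * ldWeight H f y :=
      fun j y => key_formula hm hn hcard hreg f hbj j y
    have hwlt : ∀ y z : V, ldWeight H f y < ldWeight H f z + n * (n - r) :=
      fun y z => ldWeight_lt hn hcard hreg hbj y z
    have hcardP : Fintype.card (Fin m × V) = m * n := by simp [hcard]
    have hbij : Set.BijOn (fun p : Fin m × V => f p.2 + (p.1 : ℕ) * n) Set.univ
        (Set.Icc 1 (Fintype.card (Fin m × V))) := by
      rw [hcardP]
      refine ⟨?_, ?_, ?_⟩
      · rintro ⟨j, y⟩ -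
        have h1 := hf1 y
        have hj : (j : ℕ) + 1 ≤ m := j.isLt
        have h2 : ((j : ℕ) + 1) * n ≤ m * n := Nat.mul_le_mul_right _ hj
        have h3 : ((j : ℕ) + 1) * n = (j : ℕ) * n + n := by ring
        simp only [Set.mem_Icc]
        omega
      · rintro ⟨j, y⟩ - ⟨k, z⟩ - h
        simp only at h
        have h1 := hf1 y
        have h2 := hf1 z
        have hjk : (j : ℕ) = (k : ℕ) := by
          rcases lt_trichotomy (j : ℕ) (k : ℕ) with hlt | he | hlt
          · exfalso
            have h4 : ((j : ℕ) + 1) * n ≤ (k : ℕ) * n := Nat.mul_le_mul_right _ hlt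
            have h5 : ((j : ℕ) + 1) * n = (j : ℕ) * n + n := by ring
            omega
          · exact he
          · exfalso
            have h4 : ((k : ℕ) + 1) * n ≤ (j : ℕ) * n := Nat.mul_le_mul_right _ hlt
            have h5 : ((k : ℕ) + 1) * n = (k : ℕ) * n + n := by ring
            omega
        have hjk' : j = k := Fin.ext hjk
        subst hjk'
        have hfe : f y = f z := by omega
        have := hbj.injOn (Set.mem_univ y) (Set.mem_univ z) hfe
        exact Prod.ext rfl this
      · intro t ht
        rw [Set.mem_Icc] at ht
        have hn0 : 0 < n := by omega
        have hjlt : (t - 1) / n < m := by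
          rw [Nat.div_lt_iff_lt_mul hn0]
          omega
        have hmod : (t - 1) % n < n := Nat.mod_lt _ hn0
        have hdm : (t - 1) % n + (t - 1) / n * n = t - 1 := Nat.mod_add_div' _ _
        have hs : (t - 1) % n + 1 ∈ Set.Icc 1 n := Set.mem_Icc.mpr ⟨by omega, by omega⟩
        obtain ⟨y, -, hy⟩ := hbj.surjOn hs
        refine ⟨(⟨(t - 1) / n, hjlt⟩, y), Set.mem_univ _, ?_⟩
        simp only
        rw [hy]
        omega
    have hadjW : ∀ ⦃u v : Fin m × V⦄, (lexProd (⊤ : SimpleGraph (Fin m)) H).Adj u v →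
        ldWeight (lexProd (⊤ : SimpleGraph (Fin m)) H)
          (fun p => f p.2 + (p.1 : ℕ) * n) u ≠
        ldWeight (lexProd (⊤ : SimpleGraph (Fin m)) H)
          (fun p => f p.2 + (p.1 : ℕ) * n) v := by
      rintro ⟨j, y⟩ ⟨k, z⟩ hadj heq
      have hadj' : (⊤ : SimpleGraph (Fin m)).Adj j k ∨ (j = k ∧ H.Adj y z) := hadj
      have hk1 := hkey j y
      have hk2 := hkey k z
      rcases hadj' with htop | ⟨hfe, hA⟩
      · have hne : j ≠ k := by simpa using htop
        have hb1 := hwlt y z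
        have hb2 := hwlt z y
        rcases lt_trichotomy (j : ℕ) (k : ℕ) with hlt | he | hlt
        · have h4 : ((j : ℕ) + 1) * n * (n - r) ≤ (k : ℕ) * n * (n - r) :=
            Nat.mul_le_mul_right _ (Nat.mul_le_mul_right _ hlt)
          have h5 : ((j : ℕ) + 1) * n * (n - r) = (j : ℕ) * n * (n - r) + n * (n - r) := by
            ring
          omega
        · exact hne (Fin.ext he)
        · have h4 : ((k : ℕ) + 1) * n * (n - r) ≤ (j : ℕ) * n * (n - r) :=
            Nat.mul_le_mul_right _ (Nat.mul_le_mul_right _ hlt)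
          have h5 : ((k : ℕ) + 1) * n * (n - r) = (k : ℕ) * n * (n - r) + n * (n - r) := by
            ring
          omega
      · subst hfe
        have hwe : ldWeight H f y = ldWeight H f z := by omega
        exact hf.2 hA hwe
    have hmem : (Finset.univ.image (ldWeight (lexProd (⊤ : SimpleGraph (Fin m)) H)
          (fun p => f p.2 + (p.1 : ℕ) * n))).card ∈
        {k | ∃ g, IsLDAL (lexProd (⊤ : SimpleGraph (Fin m)) H) g ∧
          (Finset.univ.image (ldWeight (lexProd (⊤ : SimpleGraph (Fin m)) H) g)).card = k} :=
      ⟨_, ⟨hbij, hadjW⟩, rfl⟩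
    refine le_trans (Nat.sInf_le hmem) ?_
    have himg : Finset.univ.image (ldWeight (lexProd (⊤ : SimpleGraph (Fin m)) H)
          (fun p => f p.2 + (p.1 : ℕ) * n)) =
        (Finset.univ.image (fun p : Fin m × V => ((p.1 : ℕ), ldWeight H f p.2))).image
          (fun q : ℕ × ℕ =>
            (n * (m - 1) * (n * m + n + 1) + 2 * q.2) / 2 - q.1 * n * (n - r)) := by
      rw [Finset.image_image]
      apply Finset.image_congr
      rintro ⟨j, y⟩ -
      simp only [Function.comp]
      have hk := hkey j y
      omega
    rw [himg]
    calc ((Finset.univ.image (fun p : Fin m × V => ((p.1 : ℕ), ldWeight H f p.2))).image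
            (fun q : ℕ × ℕ =>
              (n * (m - 1) * (n * m + n + 1) + 2 * q.2) / 2 - q.1 * n * (n - r))).card
        ≤ (Finset.univ.image (fun p : Fin m × V => ((p.1 : ℕ), ldWeight H f p.2))).card :=
          Finset.card_image_le
      _ ≤ ((Finset.univ.image (fun j : Fin m => (j : ℕ))) ×ˢ
            (Finset.univ.image (ldWeight H f))).card := by
          apply Finset.card_le_card
          intro q hq
          obtain ⟨p, -, rfl⟩ := Finset.mem_image.mp hq
          exact Finset.mem_product.mpr
            ⟨Finset.mem_image_of_mem _ (Finset.mem_univ _),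
              Finset.mem_image_of_mem _ (Finset.mem_univ _)⟩
      _ = (Finset.univ.image (fun j : Fin m => (j : ℕ))).card *
            (Finset.univ.image (ldWeight H f)).card := Finset.card_product _ _
      _ ≤ m * chiLD H := by
          refine Nat.mul_le_mul ?_ (le_of_eq hfc)
          refine le_trans Finset.card_image_le ?_
          simp
  · intro f hf _ j y
    have hbj : Set.BijOn f Set.univ (Set.Icc 1 n) := by rw [← hcard]; exact hf.1
    exact key_formula hm hn hcard hreg f hbj j y
end
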